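/- arXiv:1801.09324 — 8 statements merged into one kernel-verified Lean document; each statement's English description precedes it below -/
import Mathlib

section
/- Let d ∈ ℕ, N ∈ ℕ₀, c, κ, C ∈ (0,∞), (γ_n)_{n∈ℕ₀} ⊆ (0,∞), ϑ ∈ ℝ^d, let ⟨·,·⟩ be a scalar product on ℝ^d with induced norm ‖·‖, let g : ℝ^d → ℝ^d be Borel measurable, let (Ω, 𝓕, ℙ, (𝔽_n)_{n∈ℕ₀}) be a filtered probability space, let D : ℕ × Ω → ℝ^d be an (𝔽_n)_{n∈ℕ}-adapted process, let Θ : ℕ₀ × Ω → ℝ^d satisfy that Θ₀ is 𝔽₀-measurable and for all n ∈ ℕ that Θ_n = Θ_{n−1} + γ_n(g(Θ_{n−1}) + D_n). Assume for all n ∈ ℕ ∩ (N,∞) and A ∈ 𝔽_{n−1} with 𝔼[‖D_n‖] < ∞ that 𝔼[D_n 𝟙_A] = 0, and assume for all n ∈ ℕ and θ ∈ ℝ^d that 𝔼[‖Θ₀‖²] < ∞, 𝔼[‖D_n‖²] ≤ κ(1 + 𝔼[‖Θ_{n−1} − ϑ‖²]), sup_{l ∈ ℕ ∩ (N,∞)}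 γ_l ≤ min{c/(4κ), c}, C = inf_{l ∈ ℕ ∩ (N,∞)}[(γ_l − γ_{l−1})/(γ_l)² + c γ_{l−1}/(2 γ_l)], and ⟨θ − ϑ, g(θ)⟩ ≤ −c·max{‖θ−ϑ‖², ‖g(θ)‖²}. Then for all n ∈ ℕ₀ it holds that 𝔼[‖Θ_n − ϑ‖²] ≤ γ_n · max({2κ/C} ∪ {𝔼[‖Θ_l − ϑ‖²]/γ_l : l ∈ {0,1,...,N}}) < ∞. -/
open MeasureTheory ProbabilityTheory Filter
open scoped RealInnerProductSpace ENNReal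

set_option maxHeartbeats 1000000

section Helpers

variable {Ω : Type*} [m0 : MeasurableSpace Ω] {P : Measure Ω} [IsProbabilityMeasure P]
variable {E : Type*} [NormedAddCommGroup E] [InnerProductSpace ℝ E]

omit [IsProbabilityMeasure P] in
private lemma my_mul_integrable_of_L2 {f g : Ω → ℝ} (hf : MemLp f 2 P) (hg : MemLp g 2 P) :
    Integrable (f * g) P := by
  have h := hg.smul (φ := f) hf (r := 1)
  rw [memLp_one_iff_integrable] at h
  exact h

omit [IsProbabilityMeasure P] in
private lemma my_inner_integrable_of_L2 {f g : Ω → E} (hf : MemLp f 2 P) (hg : MemLp g 2 P) :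
    Integrable (fun ω => ⟪f ω, g ω⟫) P := by
  have h : Integrable (fun ω => ‖f ω‖ * ‖g ω‖) P :=
    my_mul_integrable_of_L2 hf.norm hg.norm
  refine h.mono' (hf.aestronglyMeasurable.inner hg.aestronglyMeasurable) ?_
  filter_upwards with ω
  rw [Real.norm_eq_abs]
  exact abs_real_inner_le_norm _ _

omit [IsProbabilityMeasure P] in
private lemma my_sq_int {f : Ω → E} (hf : MemLp f 2 P) :
    Integrable (fun ω => ‖f ω‖ ^ 2) P :=
  (memLp_two_iff_integrable_sq_norm hf.aestronglyMeasurable).mp hf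

omit [IsProbabilityMeasure P] in
private lemma my_lint_eq {f : Ω → E} (hf : MemLp f 2 P) :
    ∫⁻ ω, (‖f ω‖₊ : ℝ≥0∞) ^ 2 ∂P = ENNReal.ofReal (∫ ω, ‖f ω‖ ^ 2 ∂P) := by
  rw [ofReal_integral_eq_lintegral_ofReal (my_sq_int hf)
    (Filter.Eventually.of_forall fun ω => sq_nonneg _)]
  refine lintegral_congr fun ω => ?_
  rw [ENNReal.ofReal_pow (norm_nonneg _), ofReal_norm, enorm_eq_nnnorm]

omit [IsProbabilityMeasure P] in
private lemma my_memℒp_of_lint {f : Ω → E} (hm : AEStronglyMeasurable f P)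
    (h : ∫⁻ ω, (‖f ω‖₊ : ℝ≥0∞) ^ 2 ∂P < ⊤) : MemLp f 2 P := by
  rw [memLp_two_iff_integrable_sq_norm hm]
  refine ⟨(continuous_pow 2).comp_aestronglyMeasurable hm.norm, ?_⟩
  show ∫⁻ ω, (‖‖f ω‖ ^ 2‖₊ : ℝ≥0∞) ∂P < ⊤
  calc ∫⁻ ω, (‖‖f ω‖ ^ 2‖₊ : ℝ≥0∞) ∂P = ∫⁻ ω, (‖f ω‖₊ : ℝ≥0∞) ^ 2 ∂P := by
        refine lintegral_congr fun ω => ?_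
        rw [nnnorm_pow, nnnorm_norm, ENNReal.coe_pow]
    _ < ⊤ := h

private lemma my_orth_real {Ω : Type*} {m m0 : MeasurableSpace Ω} {P : Measure Ω}
    [IsProbabilityMeasure P] (hm : m ≤ m0) {f g : Ω → ℝ}
    (hf2 : MemLp f 2 P) (hfm : StronglyMeasurable[m] f) (hg2 : MemLp g 2 P)
    (hgmean : ∀ A : Set Ω, MeasurableSet[m] A → ∫ ω in A, g ω ∂P = 0) :
    ∫ ω, f ω * g ω ∂P = 0 := by
  have hgint : Integrable g P := hg2.integrable one_le_two
  haveI : SigmaFinite (P.trim hm) := by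
    have : IsFiniteMeasure (P.trim hm) := isFiniteMeasure_trim hm
    infer_instance
  have hcond : P[g|m] =ᵐ[P] 0 := by
    refine (ae_eq_condExp_of_forall_setIntegral_eq hm hgint
      (fun s _ _ => integrableOn_zero)
      (fun s hs _ => by simp [hgmean s hs])
      ?_).symm
    exact StronglyMeasurable.aestronglyMeasurable stronglyMeasurable_zero
  have hint : Integrable (f * g) P := my_mul_integrable_of_L2 hf2 hg2
  have h1 : ∫ ω, (f * g) ω ∂P = ∫ ω, (P[f * g|m]) ω ∂P := (integral_condExp hm).symm
  have h2 : P[f * g|m] =ᵐ[P] f * P[g|m] := condExp_mul_of_stronglyMeasurable_left hfm hint hgint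
  have h3 : (f * P[g|m] : Ω → ℝ) =ᵐ[P] 0 := by
    filter_upwards [hcond] with ω hω
    simp [Pi.mul_apply, hω]
  have h0 : ∫ ω, f ω * g ω ∂P = ∫ ω, (f * g) ω ∂P := rfl
  rw [h0, h1, integral_congr_ae (h2.trans h3)]
  simp

private lemma my_orth_vec [FiniteDimensional ℝ E] [MeasurableSpace E] [BorelSpace E]
    {Ω : Type*} {m m0 : MeasurableSpace Ω} {P : Measure Ω} [IsProbabilityMeasure P]
    (hm : m ≤ m0) {f g : Ω → E}
    (hf2 : MemLp f 2 P) (hfm : StronglyMeasurable[m] f) (hg2 : MemLp g 2 P)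
    (hgmean : ∀ A : Set Ω, MeasurableSet[m] A → ∫ ω in A, g ω ∂P = 0) :
    ∫ ω, ⟪f ω, g ω⟫ ∂P = 0 := by
  have hgint : Integrable g P := hg2.integrable one_le_two
  let b := stdOrthonormalBasis ℝ E
  have hL2 : ∀ (h : Ω → E), MemLp h 2 P → ∀ v : E,
      MemLp (fun ω => ⟪h ω, v⟫) 2 P := by
    intro h hh v
    refine MemLp.of_le_mul hh.norm
      (hh.aestronglyMeasurable.inner aestronglyMeasurable_const) (c := ‖v‖) ?_
    filter_upwards with ω
    rw [Real.norm_eq_abs, norm_norm]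
    calc |⟪h ω, v⟫| ≤ ‖h ω‖ * ‖v‖ := abs_real_inner_le_norm _ _
      _ = ‖v‖ * ‖h ω‖ := by ring
  have hfi : ∀ i, MemLp (fun ω => ⟪f ω, b i⟫) 2 P := fun i => hL2 f hf2 (b i)
  have hgi : ∀ i, MemLp (fun ω => ⟪b i, g ω⟫) 2 P := by
    intro i
    simp_rw [real_inner_comm]
    exact hL2 g hg2 (b i)
  have hsm : ∀ i, StronglyMeasurable[m] (fun ω => ⟪f ω, b i⟫) :=
    fun i => hfm.inner stronglyMeasurable_const
  have hzero : ∀ i, ∀ A : Set Ω, MeasurableSet[m] A → ∫ ω in A, ⟪b i, g ω⟫ ∂P = 0 := by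
    intro i A hA
    rw [integral_inner hgint.integrableOn, hgmean A hA, inner_zero_right]
  have hterm : ∀ i, ∫ ω, ⟪f ω, b i⟫ * ⟪b i, g ω⟫ ∂P = 0 :=
    fun i => my_orth_real hm (hfi i) (hsm i) (hgi i) (hzero i)
  calc ∫ ω, ⟪f ω, g ω⟫ ∂P
      = ∫ ω, ∑ i, ⟪f ω, b i⟫ * ⟪b i, g ω⟫ ∂P := by
        refine integral_congr_ae (Filter.Eventually.of_forall fun ω => ?_)
        exact (b.sum_inner_mul_inner (f ω) (g ω)).symm
    _ = ∑ i, ∫ ω, ⟪f ω, b i⟫ * ⟪b i, g ω⟫ ∂P := by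
        refine integral_finset_sum _ fun i _ => ?_
        have := my_mul_integrable_of_L2 (hfi i) (hgi i)
        exact this
    _ = 0 := by simp [hterm]

private lemma my_expand (a b d : E) (t : ℝ) :
    ‖a + t • (b + d)‖ ^ 2 = ‖a‖ ^ 2 + 2 * t * ⟪a, b⟫ + 2 * t * ⟪a, d⟫
      + t ^ 2 * (‖b‖ ^ 2 + 2 * ⟪b, d⟫ + ‖d‖ ^ 2) := by
  rw [norm_add_sq_real, inner_smul_right, inner_add_right, norm_smul,
    mul_pow, norm_add_sq_real]
  rw [Real.norm_eq_abs, sq_abs]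
  ring

private lemma my_arith (c κ C γn γk M ek en I XX G Dv : ℝ)
    (hc : 0 < c) (hc1 : c ≤ 1) (hκ : 0 < κ) (hC : 0 < C)
    (hγn : 0 < γn) (hγk : 0 < γk)
    (hγnc : γn ≤ c) (hγnκ : γn ≤ c / (4 * κ))
    (hek : 0 ≤ ek) (hekX : ek ≤ XX) (hG : 0 ≤ G) (hGX : G ≤ XX)
    (hDv : Dv ≤ κ * (1 + ek)) (hDv0 : 0 ≤ Dv)
    (hI : I ≤ -c * XX)
    (heq : en = ek + 2 * γn * I + γn ^ 2 * (G + Dv))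
    (hC_le : C ≤ (γn - γk) / γn ^ 2 + c * γk / (2 * γn))
    (hM : 2 * κ / C ≤ M) (hIH : ek ≤ γk * M) : en ≤ γn * M := by
  have hXX : 0 ≤ XX := le_trans hek hekX
  have hMpos : 0 < M := lt_of_lt_of_le (div_pos (by linarith) hC) hM
  have hγnκ' : γn * κ ≤ c / 4 := by
    rw [le_div_iff₀ (by positivity)] at hγnκ
    nlinarith
  have h1 : en ≤ ek - 2 * c * γn * XX + γn ^ 2 * G + γn ^ 2 * Dv := by nlinarith
  have h2 : γn ^ 2 * G ≤ c * γn * XX := by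
    nlinarith [mul_le_mul_of_nonneg_right hγnc hG,
      mul_le_mul_of_nonneg_left hGX (mul_nonneg hc.le hγn.le), hγn.le]
  have h3 : γn ^ 2 * Dv ≤ κ * γn ^ 2 + (c * γn / 4) * ek := by
    nlinarith [mul_le_mul_of_nonneg_left hDv (sq_nonneg γn),
      mul_le_mul_of_nonneg_right hγnκ' (mul_nonneg hγn.le hek)]
  have h4 : en ≤ (1 - (3 / 4) * c * γn) * ek + κ * γn ^ 2 := by
    nlinarith [mul_le_mul_of_nonneg_left hekX (mul_nonneg hc.le hγn.le)]
  have hcoef : (0:ℝ) ≤ 1 - (3 / 4) * c * γn := by nlinarith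
  have h5 : en ≤ (1 - (3 / 4) * c * γn) * (γk * M) + κ * γn ^ 2 := by
    linarith [mul_le_mul_of_nonneg_left hIH hcoef]
  have h6 : M * C * γn ^ 2 ≤ M * (γn - γk) + M * c * γk * γn / 2 := by
    have h := mul_le_mul_of_nonneg_right
      (mul_le_mul_of_nonneg_left hC_le hMpos.le) (sq_nonneg γn)
    have hid : M * ((γn - γk) / γn ^ 2 + c * γk / (2 * γn)) * γn ^ 2
        = M * (γn - γk) + M * c * γk * γn / 2 := by
      field_simp
    linarith [h, hid.ge, hid.le]
  have h7 : 2 * κ ≤ M * C := by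
    rw [div_le_iff₀ hC] at hM; linarith
  nlinarith [mul_nonneg (mul_nonneg (mul_nonneg hMpos.le hc.le) hγn.le) hγk.le,
    mul_le_mul_of_nonneg_right h7 (sq_nonneg γn)]

end Helpers

/-- **Mean square error of stochastic approximation** (Proposition 3.4). -/
theorem stmt_3 {E : Type*} [NormedAddCommGroup E] [InnerProductSpace ℝ E]
    [FiniteDimensional ℝ E] [MeasurableSpace E] [BorelSpace E]
    (d : ℕ) (hd : 0 < d) (hdim : Module.finrank ℝ E = d)
    (N : ℕ) (c κ C : ℝ) (hc : 0 < c) (hκ : 0 < κ) (hC : 0 < C)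
    (γ : ℕ → ℝ) (hγ : ∀ n : ℕ, 0 < γ n)
    (ϑ : E) (g : E → E) (hg : Measurable g)
    {Ω : Type*} [m0 : MeasurableSpace Ω] (P : Measure Ω) [IsProbabilityMeasure P]
    (ℱ : Filtration ℕ m0)
    (D : ℕ → Ω → E) (hD_adapted : ∀ n : ℕ, 1 ≤ n → Measurable[ℱ n] (D n))
    (Θ : ℕ → Ω → E) (hΘ0_meas : Measurable[ℱ 0] (Θ 0))
    (hΘ : ∀ n : ℕ, 1 ≤ n → ∀ ω : Ω,
      Θ n ω = Θ (n - 1) ω + γ n • (g (Θ (n - 1) ω) + D n ω))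
    (hD_mean : ∀ n : ℕ, N < n → Integrable (D n) P →
      ∀ A : Set Ω, MeasurableSet[ℱ (n - 1)] A → ∫ ω in A, D n ω ∂P = 0)
    (hΘ0_int : ∫⁻ ω, (‖Θ 0 ω‖₊ : ℝ≥0∞) ^ 2 ∂P < ⊤)
    (hD_mom : ∀ n : ℕ, 1 ≤ n →
      ∫⁻ ω, (‖D n ω‖₊ : ℝ≥0∞) ^ 2 ∂P ≤
        ENNReal.ofReal κ * (1 + ∫⁻ ω, (‖Θ (n - 1) ω - ϑ‖₊ : ℝ≥0∞) ^ 2 ∂P))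
    (hsup : ∀ l : ℕ, N < l → γ l ≤ min (c / (4 * κ)) c)
    (hCdef : C = sInf {x : ℝ | ∃ l : ℕ, N < l ∧
      x = (γ l - γ (l - 1)) / γ l ^ 2 + c * γ (l - 1) / (2 * γ l)})
    (hmono : ∀ θ : E, ⟪θ - ϑ, g θ⟫ ≤ -c * max (‖θ - ϑ‖ ^ 2) (‖g θ‖ ^ 2)) :
    ∀ n : ℕ, ∫⁻ ω, (‖Θ n ω - ϑ‖₊ : ℝ≥0∞) ^ 2 ∂P ≤
      ENNReal.ofReal (γ n * max (2 * κ / C)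
        (⨆ l : Fin (N + 1), (∫⁻ ω, (‖Θ l ω - ϑ‖₊ : ℝ≥0∞) ^ 2 ∂P).toReal / γ l)) := by
  -- basic consequences of the monotonicity assumption
  have hgle : ∀ θ : E, ‖g θ‖ ≤ c⁻¹ * ‖θ - ϑ‖ := by
    intro θ
    have h := hmono θ
    have habs : -(‖θ - ϑ‖ * ‖g θ‖) ≤ ⟪θ - ϑ, g θ⟫ := by
      have := abs_real_inner_le_norm (θ - ϑ) (g θ)
      have := neg_abs_le (⟪θ - ϑ, g θ⟫ : ℝ)
      linarith
    have hmax : c * ‖g θ‖ ^ 2 ≤ c * max (‖θ - ϑ‖ ^ 2) (‖g θ‖ ^ 2) :=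
      mul_le_mul_of_nonneg_left (le_max_right _ _) hc.le
    rcases eq_or_lt_of_le (norm_nonneg (g θ)) with h0 | hpos
    · rw [← h0]; positivity
    · have key : c * ‖g θ‖ ≤ ‖θ - ϑ‖ := by nlinarith
      calc ‖g θ‖ = c⁻¹ * (c * ‖g θ‖) := by field_simp
        _ ≤ c⁻¹ * ‖θ - ϑ‖ := mul_le_mul_of_nonneg_left key (by positivity)
  have hc1 : c ≤ 1 := by
    have hnt : Nontrivial E := by
      have h0 : 0 < Module.finrank ℝ E := hdim ▸ hd
      exact Module.nontrivial_of_finrank_pos h0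
    obtain ⟨x, hx⟩ := exists_norm_eq E (le_of_lt one_pos)
    have h := hmono (ϑ + x)
    rw [add_sub_cancel_left, hx] at h
    set s := ‖g (ϑ + x)‖ with hs
    have hs0 : 0 ≤ s := norm_nonneg _
    have habs : -(1 * s) ≤ ⟪x, g (ϑ + x)⟫ := by
      have h1 := abs_real_inner_le_norm x (g (ϑ + x))
      rw [hx, ← hs] at h1
      have := neg_abs_le (⟪x, g (ϑ + x)⟫ : ℝ)
      linarith
    have hkey : c * max (1 ^ 2) (s ^ 2) ≤ s := by linarith
    have hm1 : c ≤ c * max (1 ^ 2) (s ^ 2) :=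
      le_mul_of_one_le_right hc.le (by simpa using le_max_left (1:ℝ) (s^2))
    have hm2 : c * s ^ 2 ≤ c * max (1 ^ 2) (s ^ 2) :=
      mul_le_mul_of_nonneg_left (le_max_right _ _) hc.le
    have h1 : c ≤ s := le_trans hm1 hkey
    have h2 : c * s ^ 2 ≤ s := le_trans hm2 hkey
    nlinarith
  -- measurability
  have hΘm : ∀ n, Measurable[ℱ n] (Θ n) := by
    intro n
    induction n with
    | zero => exact hΘ0_meas
    | succ k ih =>
      have hfun : Θ (k + 1) = fun ω => Θ k ω + γ (k + 1) • (g (Θ k ω) + D (k + 1) ω) := by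
        funext ω
        simpa using hΘ (k + 1) (Nat.succ_le_succ k.zero_le) ω
      rw [hfun]
      have hk : Measurable[ℱ (k + 1)] (Θ k) := ih.mono (ℱ.mono k.le_succ) le_rfl
      exact hk.add (((hg.comp hk).add (hD_adapted (k + 1) (Nat.succ_le_succ k.zero_le))).const_smul _)
  have hΘm0 : ∀ n, Measurable (Θ n) := fun n => (hΘm n).mono (ℱ.le n) le_rfl
  have hXmeas : ∀ n, Measurable (fun ω => Θ n ω - ϑ) := fun n => (hΘm0 n).sub measurable_const
  -- square integrability
  have hX : ∀ n, MemLp (fun ω => Θ n ω - ϑ) 2 P := by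
    intro n
    induction n with
    | zero =>
      have h0 : MemLp (Θ 0) 2 P :=
        my_memℒp_of_lint (hΘm0 0).aestronglyMeasurable hΘ0_int
      exact h0.sub (memLp_const ϑ)
    | succ k ih =>
      have hYk : MemLp (fun ω => g (Θ k ω)) 2 P := by
        refine MemLp.of_le_mul ih ((hg.comp (hΘm0 k)).aestronglyMeasurable) (c := c⁻¹) ?_
        filter_upwards with ω
        exact hgle (Θ k ω)
      have hDk : MemLp (D (k + 1)) 2 P := by
        refine my_memℒp_of_lint
          ((hD_adapted (k + 1) (Nat.succ_le_succ k.zero_le)).mono (ℱ.le _) le_rfl).aestronglyMeasurable ?_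
        refine lt_of_le_of_lt (by simpa using hD_mom (k + 1) (Nat.succ_le_succ k.zero_le)) ?_
        rw [my_lint_eq ih]
        exact ENNReal.mul_lt_top ENNReal.ofReal_lt_top
          (ENNReal.add_lt_top.mpr ⟨ENNReal.one_lt_top, ENNReal.ofReal_lt_top⟩)
      have hfun : (fun ω => Θ (k + 1) ω - ϑ)
          = fun ω => (Θ k ω - ϑ) + γ (k + 1) • (g (Θ k ω) + D (k + 1) ω) := by
        funext ω
        rw [hΘ (k + 1) (Nat.succ_le_succ k.zero_le) ω]
        simp only [Nat.add_sub_cancel]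
        abel
      rw [hfun]
      exact ih.add ((hYk.add hDk).const_smul _)
  have hY2 : ∀ n, MemLp (fun ω => g (Θ n ω)) 2 P := by
    intro n
    refine MemLp.of_le_mul (hX n) ((hg.comp (hΘm0 n)).aestronglyMeasurable) (c := c⁻¹) ?_
    filter_upwards with ω
    exact hgle (Θ n ω)
  have hD2 : ∀ n, MemLp (D (n + 1)) 2 P := by
    intro n
    refine my_memℒp_of_lint
      ((hD_adapted (n + 1) (Nat.succ_le_succ n.zero_le)).mono (ℱ.le _) le_rfl).aestronglyMeasurable ?_
    refine lt_of_le_of_lt (by simpa using hD_mom (n + 1) (Nat.succ_le_succ n.zero_le)) ?_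
    rw [my_lint_eq (hX n)]
    exact ENNReal.mul_lt_top ENNReal.ofReal_lt_top
      (ENNReal.add_lt_top.mpr ⟨ENNReal.one_lt_top, ENNReal.ofReal_lt_top⟩)
  -- the real-valued second moments
  set e : ℕ → ℝ := fun n => ∫ ω, ‖Θ n ω - ϑ‖ ^ 2 ∂P with he_def
  have hLe : ∀ n, ∫⁻ ω, (‖Θ n ω - ϑ‖₊ : ℝ≥0∞) ^ 2 ∂P = ENNReal.ofReal (e n) :=
    fun n => my_lint_eq (hX n)
  have he0 : ∀ n, 0 ≤ e n := fun n => integral_nonneg fun ω => sq_nonneg _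
  set M := max (2 * κ / C)
    (⨆ l : Fin (N + 1), (∫⁻ ω, (‖Θ l ω - ϑ‖₊ : ℝ≥0∞) ^ 2 ∂P).toReal / γ l) with hMdef
  suffices key : ∀ n, e n ≤ γ n * M by
    intro n
    rw [hLe n]
    exact ENNReal.ofReal_le_ofReal (key n)
  -- trivial bound for n ≤ N
  have hMtriv : ∀ n, n ≤ N → e n ≤ γ n * M := by
    intro n hn
    have h1 : e n / γ n ≤ ⨆ l : Fin (N + 1),
        (∫⁻ ω, (‖Θ l ω - ϑ‖₊ : ℝ≥0∞) ^ 2 ∂P).toReal / γ l := by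
      have h := le_ciSup (f := fun l : Fin (N + 1) =>
        (∫⁻ ω, (‖Θ l ω - ϑ‖₊ : ℝ≥0∞) ^ 2 ∂P).toReal / γ l)
        (Set.Finite.bddAbove (Set.finite_range _)) ⟨n, by omega⟩
      simpa [hLe, ENNReal.toReal_ofReal (he0 _)] using h
    calc e n = γ n * (e n / γ n) := by
          rw [mul_comm, div_mul_cancel₀ _ (hγ n).ne']
      _ ≤ γ n * M := mul_le_mul_of_nonneg_left (le_trans h1 (le_max_right _ _)) (hγ n).le
  have hMge : 2 * κ / C ≤ M := le_max_left _ _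
  -- the infimum bound
  have hbracket : ∀ l : ℕ, N < l →
      C ≤ (γ l - γ (l - 1)) / γ l ^ 2 + c * γ (l - 1) / (2 * γ l) := by
    intro l hl
    by_cases hbdd : BddBelow {x : ℝ | ∃ l : ℕ, N < l ∧
        x = (γ l - γ (l - 1)) / γ l ^ 2 + c * γ (l - 1) / (2 * γ l)}
    · rw [hCdef]
      exact csInf_le hbdd ⟨l, hl, rfl⟩
    · exfalso
      rw [hCdef, Real.sInf_of_not_bddBelow hbdd] at hC
      exact lt_irrefl 0 hC
  -- main induction
  intro n
  induction n with
  | zero => exact hMtriv 0 N.zero_le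
  | succ k ih =>
    by_cases hk : k + 1 ≤ N
    · exact hMtriv _ hk
    · have hNk : N < k + 1 := by omega
      have hone : 1 ≤ k + 1 := Nat.succ_le_succ k.zero_le
      set γn := γ (k + 1) with hγn_def
      have hγnpos := hγ (k + 1)
      have hXk := hX k
      have hYk := hY2 k
      have hDk := hD2 k
      have hintXY : Integrable (fun ω => ⟪Θ k ω - ϑ, g (Θ k ω)⟫) P :=
        my_inner_integrable_of_L2 hXk hYk
      have hintXD : Integrable (fun ω => ⟪Θ k ω - ϑ, D (k + 1) ω⟫) P :=
        my_inner_integrable_of_L2 hXk hDk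
      have hintYD : Integrable (fun ω => ⟪g (Θ k ω), D (k + 1) ω⟫) P :=
        my_inner_integrable_of_L2 hYk hDk
      have hiX2 : Integrable (fun ω => ‖Θ k ω - ϑ‖ ^ 2) P := my_sq_int hXk
      have hiY2 : Integrable (fun ω => ‖g (Θ k ω)‖ ^ 2) P := my_sq_int hYk
      have hiD2 : Integrable (fun ω => ‖D (k + 1) ω‖ ^ 2) P := my_sq_int hDk
      have hiMax : Integrable (fun ω => max (‖Θ k ω - ϑ‖ ^ 2) (‖g (Θ k ω)‖ ^ 2)) P := by
        refine (hiX2.add hiY2).mono'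
          ((((hXmeas k).norm.pow_const 2).max
            (((hg.comp (hΘm0 k)).norm.pow_const 2))).aestronglyMeasurable) ?_
        filter_upwards with ω
        rw [Real.norm_eq_abs, abs_of_nonneg (le_trans (sq_nonneg _) (le_max_left _ _))]
        exact max_le (le_add_of_nonneg_right (sq_nonneg _)) (le_add_of_nonneg_left (sq_nonneg _))
      -- orthogonality
      have hsmX : StronglyMeasurable[ℱ k] (fun ω => Θ k ω - ϑ) :=
        ((hΘm k).sub measurable_const).stronglyMeasurable
      have hsmY : StronglyMeasurable[ℱ k] (fun ω => g (Θ k ω)) :=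
        (hg.comp (hΘm k)).stronglyMeasurable
      have hmean : ∀ A : Set Ω, MeasurableSet[ℱ k] A → ∫ ω in A, D (k + 1) ω ∂P = 0 := by
        intro A hA
        exact hD_mean (k + 1) hNk (hDk.integrable one_le_two) A (by simpa using hA)
      have hIXD : ∫ ω, ⟪Θ k ω - ϑ, D (k + 1) ω⟫ ∂P = 0 :=
        my_orth_vec (ℱ.le k) hXk hsmX hDk hmean
      have hIYD : ∫ ω, ⟪g (Θ k ω), D (k + 1) ω⟫ ∂P = 0 :=
        my_orth_vec (ℱ.le k) hYk hsmY hDk hmean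
      -- expansion of the squared norm
      have hpt : ∀ ω, ‖Θ (k + 1) ω - ϑ‖ ^ 2
          = ‖Θ k ω - ϑ‖ ^ 2 + 2 * γn * ⟪Θ k ω - ϑ, g (Θ k ω)⟫
            + 2 * γn * ⟪Θ k ω - ϑ, D (k + 1) ω⟫
            + γn ^ 2 * (‖g (Θ k ω)‖ ^ 2 + 2 * ⟪g (Θ k ω), D (k + 1) ω⟫
              + ‖D (k + 1) ω‖ ^ 2) := by
        intro ω
        have h0 : Θ (k + 1) ω - ϑ = (Θ k ω - ϑ) + γn • (g (Θ k ω) + D (k + 1) ω) := by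
          rw [hΘ (k + 1) hone ω]
          simp only [Nat.add_sub_cancel]
          abel
        rw [h0, my_expand]
      have heq : e (k + 1) = e k + 2 * γn * (∫ ω, ⟪Θ k ω - ϑ, g (Θ k ω)⟫ ∂P)
          + 2 * γn * (∫ ω, ⟪Θ k ω - ϑ, D (k + 1) ω⟫ ∂P)
          + γn ^ 2 * ((∫ ω, ‖g (Θ k ω)‖ ^ 2 ∂P)
            + 2 * (∫ ω, ⟪g (Θ k ω), D (k + 1) ω⟫ ∂P) + (∫ ω, ‖D (k + 1) ω‖ ^ 2 ∂P)) := by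
        have e1 : e (k + 1) = ∫ ω, (‖Θ k ω - ϑ‖ ^ 2 + 2 * γn * ⟪Θ k ω - ϑ, g (Θ k ω)⟫
            + 2 * γn * ⟪Θ k ω - ϑ, D (k + 1) ω⟫
            + γn ^ 2 * (‖g (Θ k ω)‖ ^ 2 + 2 * ⟪g (Θ k ω), D (k + 1) ω⟫
              + ‖D (k + 1) ω‖ ^ 2)) ∂P :=
          integral_congr_ae (Filter.Eventually.of_forall hpt)
        have i2 : Integrable (fun ω => 2 * γn * ⟪Θ k ω - ϑ, g (Θ k ω)⟫) P :=
          hintXY.const_mul (2 * γn)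
        have i3 : Integrable (fun ω => 2 * γn * ⟪Θ k ω - ϑ, D (k + 1) ω⟫) P :=
          hintXD.const_mul (2 * γn)
        have i5 : Integrable (fun ω => 2 * ⟪g (Θ k ω), D (k + 1) ω⟫) P :=
          hintYD.const_mul 2
        have iA : Integrable (fun ω => ‖Θ k ω - ϑ‖ ^ 2
            + 2 * γn * ⟪Θ k ω - ϑ, g (Θ k ω)⟫) P := hiX2.add i2
        have iB : Integrable (fun ω => ‖Θ k ω - ϑ‖ ^ 2
            + 2 * γn * ⟪Θ k ω - ϑ, g (Θ k ω)⟫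
            + 2 * γn * ⟪Θ k ω - ϑ, D (k + 1) ω⟫) P := iA.add i3
        have iC : Integrable (fun ω => ‖g (Θ k ω)‖ ^ 2
            + 2 * ⟪g (Θ k ω), D (k + 1) ω⟫) P := hiY2.add i5
        have i56 : Integrable (fun ω => ‖g (Θ k ω)‖ ^ 2
            + 2 * ⟪g (Θ k ω), D (k + 1) ω⟫ + ‖D (k + 1) ω‖ ^ 2) P := iC.add hiD2
        have i4 : Integrable (fun ω => γn ^ 2 * (‖g (Θ k ω)‖ ^ 2
            + 2 * ⟪g (Θ k ω), D (k + 1) ω⟫ + ‖D (k + 1) ω‖ ^ 2)) P :=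
          i56.const_mul (γn ^ 2)
        rw [e1, integral_add iB i4, integral_add iA i3,
          integral_add hiX2 i2, integral_const_mul, integral_const_mul, integral_const_mul,
          integral_add iC hiD2, integral_add hiY2 i5, integral_const_mul]
      rw [hIXD, hIYD] at heq
      -- the inequality pieces
      have hIXY_le : (∫ ω, ⟪Θ k ω - ϑ, g (Θ k ω)⟫ ∂P)
          ≤ -c * ∫ ω, max (‖Θ k ω - ϑ‖ ^ 2) (‖g (Θ k ω)‖ ^ 2) ∂P := by
        rw [← integral_const_mul]
        exact integral_mono hintXY (hiMax.const_mul (-c)) fun ω => hmono (Θ k ω)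
      have hekX : e k ≤ ∫ ω, max (‖Θ k ω - ϑ‖ ^ 2) (‖g (Θ k ω)‖ ^ 2) ∂P :=
        integral_mono hiX2 hiMax fun ω => le_max_left _ _
      have hGX : (∫ ω, ‖g (Θ k ω)‖ ^ 2 ∂P)
          ≤ ∫ ω, max (‖Θ k ω - ϑ‖ ^ 2) (‖g (Θ k ω)‖ ^ 2) ∂P :=
        integral_mono hiY2 hiMax fun ω => le_max_right _ _
      have hEY0 : 0 ≤ ∫ ω, ‖g (Θ k ω)‖ ^ 2 ∂P := integral_nonneg fun ω => sq_nonneg _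
      have hED0 : 0 ≤ ∫ ω, ‖D (k + 1) ω‖ ^ 2 ∂P := integral_nonneg fun ω => sq_nonneg _
      have hEDle : (∫ ω, ‖D (k + 1) ω‖ ^ 2 ∂P) ≤ κ * (1 + e k) := by
        have h := hD_mom (k + 1) hone
        simp only [Nat.add_sub_cancel] at h
        rw [my_lint_eq hDk, hLe k] at h
        have hrw : ENNReal.ofReal κ * (1 + ENNReal.ofReal (e k))
            = ENNReal.ofReal (κ * (1 + e k)) := by
          rw [ENNReal.ofReal_mul hκ.le, ENNReal.ofReal_add zero_le_one (he0 k),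
            ENNReal.ofReal_one]
        rw [hrw] at h
        exact (ENNReal.ofReal_le_ofReal_iff (by positivity)).mp h
      have hCle : C ≤ (γn - γ k) / γn ^ 2 + c * γ k / (2 * γn) := by
        have := hbracket (k + 1) hNk
        simpa using this
      have hγsup := hsup (k + 1) hNk
      exact my_arith c κ C γn (γ k) M (e k) (e (k + 1))
        (∫ ω, ⟪Θ k ω - ϑ, g (Θ k ω)⟫ ∂P)
        (∫ ω, max (‖Θ k ω - ϑ‖ ^ 2) (‖g (Θ k ω)‖ ^ 2) ∂P)
        (∫ ω, ‖g (Θ k ω)‖ ^ 2 ∂P) (∫ ω, ‖D (k + 1) ω‖ ^ 2 ∂P)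
        hc hc1 hκ hC hγnpos (hγ k) (le_trans hγsup (min_le_right _ _))
        (le_trans hγsup (min_le_left _ _)) (he0 k) hekX hEY0 hGX hEDle hED0
        hIXY_le (by linarith [heq]) hCle hMge ih
end

section
/- Let d ∈ ℕ, N ∈ ℕ₀, k, κ, c, C ∈ (0,∞), (γ_n)_{n∈ℕ₀} ⊆ (0,∞), let g : ℝ^d → ℝ^d be Borel measurable, let (Ω, 𝓕, ℙ, (𝔽_n)_{n∈ℕ₀}) be a filtered probability space, let D : ℕ × Ω → ℝ^d be an (𝔽_n)_{n∈ℕ}-adapted process, let Θ : ℕ₀ × Ω → ℝ^d satisfy that Θ₀ is 𝔽₀-measurable and for all n ∈ ℕ that Θ_n = Θ_{n−1} + γ_n(g(Θ_{n−1}) + D_n), and let V ∈ C¹(ℝ^d, [0,∞)). Assume for all m ∈ ℕ₀, n ∈ ℕ ∩ (N,∞), t ∈ [0,1], θ ∈ ℝ^d that (i) 𝔼[V(Θ_m) + |V′(Θ_{n−1} + γ_n g(Θ_{n−1}))(D_n)|] < ∞, (ii) ∫₀¹ 𝔼[|V′(Θ_{n−1} + γ_n(g(Θ_{n−1}) + sD_n))(D_n)|]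 ds < ∞, (iii) 𝔼[V′(Θ_{n−1} + γ_n g(Θ_{n−1}))(D_n)] = 0 and V(θ + γ_n g(θ)) ≤ (1 − cγ_n)V(θ), (iv) 𝔼[|V′(Θ_{n−1} + γ_n(g(Θ_{n−1}) + tD_n))(D_n) − V′(Θ_{n−1} + γ_n g(Θ_{n−1}))(D_n)|] ≤ κ((γ_n)^k + γ_n 𝔼[V(Θ_{n−1})]), and (v) sup_{l ∈ ℕ ∩ (N,∞)} γ_l ≤ min{c/(2κ), 2/c} and C = inf_{l ∈ ℕ ∩ (N,∞)}[((γ_l)^k − (γ_{l−1})^k)/(γ_l)^{k+1} + c(γ_{l−1})^k/(2(γ_l)^k)]. Then for all n ∈ ℕ₀ it holds that 𝔼[V(Θ_n)] ≤ max({κ/C} ∪ {𝔼[V(Θ_l)]/(γ_l)^k : l ∈ {0,1,...,N}}) · (γ_n)^k < ∞. -/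
open MeasureTheory ProbabilityTheory Filter
open scoped ENNReal

set_option maxHeartbeats 1000000 in
/-- **Lyapunov-based convergence for stochastic approximation** (Proposition 3.2). -/
theorem stmt_5 (d : ℕ) (hd : 0 < d)
    (N : ℕ) (k κ c C : ℝ) (hk : 0 < k) (hκ : 0 < κ) (hc : 0 < c) (hC : 0 < C)
    (γ : ℕ → ℝ) (hγ : ∀ n : ℕ, 0 < γ n)
    (g : EuclideanSpace ℝ (Fin d) → EuclideanSpace ℝ (Fin d)) (hg : Measurable g)
    {Ω : Type*} [m0 : MeasurableSpace Ω] (P : Measure Ω) [IsProbabilityMeasure P]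
    (ℱ : Filtration ℕ m0)
    (D : ℕ → Ω → EuclideanSpace ℝ (Fin d))
    (hD_adapted : ∀ n : ℕ, 1 ≤ n → Measurable[ℱ n] (D n))
    (Θ : ℕ → Ω → EuclideanSpace ℝ (Fin d)) (hΘ0_meas : Measurable[ℱ 0] (Θ 0))
    (hΘ : ∀ n : ℕ, 1 ≤ n → ∀ ω : Ω,
      Θ n ω = Θ (n - 1) ω + γ n • (g (Θ (n - 1) ω) + D n ω))
    (V : EuclideanSpace ℝ (Fin d) → ℝ) (hV_C1 : ContDiff ℝ 1 V) (hV_nonneg : ∀ θ, 0 ≤ V θ)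
    (h1 : ∀ m : ℕ, Integrable (fun ω => V (Θ m ω)) P)
    (h1' : ∀ n : ℕ, N < n →
      Integrable (fun ω => fderiv ℝ V (Θ (n - 1) ω + γ n • g (Θ (n - 1) ω)) (D n ω)) P)
    (h2 : ∀ n : ℕ, N < n →
      (∫⁻ s in Set.Icc (0 : ℝ) 1, ∫⁻ ω, ENNReal.ofReal
        |fderiv ℝ V (Θ (n - 1) ω + γ n • (g (Θ (n - 1) ω) + s • D n ω)) (D n ω)| ∂P) < ⊤)
    (h3 : ∀ n : ℕ, N < n →
      ∫ ω, fderiv ℝ V (Θ (n - 1) ω + γ n • g (Θ (n - 1) ω)) (D n ω) ∂P = 0)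
    (h3' : ∀ n : ℕ, N < n → ∀ θ : EuclideanSpace ℝ (Fin d),
      V (θ + γ n • g θ) ≤ (1 - c * γ n) * V θ)
    (h4 : ∀ n : ℕ, N < n → ∀ t ∈ Set.Icc (0 : ℝ) 1,
      ∫⁻ ω, ENNReal.ofReal
          |fderiv ℝ V (Θ (n - 1) ω + γ n • (g (Θ (n - 1) ω) + t • D n ω)) (D n ω)
            - fderiv ℝ V (Θ (n - 1) ω + γ n • g (Θ (n - 1) ω)) (D n ω)| ∂P ≤
        ENNReal.ofReal (κ * (γ n ^ k + γ n * ∫ ω, V (Θ (n - 1) ω) ∂P)))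
    (h5 : ∀ l : ℕ, N < l → γ l ≤ min (c / (2 * κ)) (2 / c))
    (hCdef : C = sInf {x : ℝ | ∃ l : ℕ, N < l ∧
      x = (γ l ^ k - γ (l - 1) ^ k) / γ l ^ (k + 1) + c * γ (l - 1) ^ k / (2 * γ l ^ k)}) :
    ∀ n : ℕ, ∫ ω, V (Θ n ω) ∂P ≤
      max (κ / C) (⨆ l : Fin (N + 1), (∫ ω, V (Θ l ω) ∂P) / γ l ^ k) * γ n ^ k := by
  have hVcont : Continuous V := hV_C1.continuous
  have hVdiff : Differentiable ℝ V := hV_C1.differentiable one_ne_zero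
  have hfc : Continuous (fderiv ℝ V) := hV_C1.continuous_fderiv one_ne_zero
  have hΘmeas : ∀ j, Measurable (Θ j) := by
    intro j
    induction j with
    | zero => exact hΘ0_meas.mono (ℱ.le 0) le_rfl
    | succ m ih =>
      have hD : Measurable (D (m+1)) :=
        (hD_adapted (m+1) (Nat.succ_le_succ (Nat.zero_le _))).mono (ℱ.le _) le_rfl
      have he : Θ (m+1) = fun ω => Θ m ω + γ (m+1) • (g (Θ m ω) + D (m+1) ω) := by
        funext ω; simpa using hΘ (m+1) (Nat.succ_le_succ (Nat.zero_le _)) ω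
      rw [he]
      exact ih.add (((hg.comp ih).add hD).const_smul (γ (m+1)))
  -- key one-step estimate
  have key : ∀ m : ℕ, N < m + 1 →
      ∫ ω, V (Θ (m+1) ω) ∂P ≤ (1 - c * γ (m+1)) * ∫ ω, V (Θ m ω) ∂P
        + κ * γ (m+1) * (γ (m+1) ^ k + γ (m+1) * ∫ ω, V (Θ m ω) ∂P) := by
    intro m hn
    have h1le : 1 ≤ m + 1 := Nat.succ_le_succ (Nat.zero_le _)
    have hγpos : 0 < γ (m+1) := hγ _
    have hDm : Measurable (D (m+1)) := (hD_adapted _ h1le).mono (ℱ.le _) le_rfl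
    have hXm : Measurable (Θ m) := hΘmeas m
    set F : ℝ → Ω → ℝ :=
      fun s ω => fderiv ℝ V (Θ m ω + γ (m+1) • (g (Θ m ω) + s • D (m+1) ω)) (D (m+1) ω)
      with hF
    set a : Ω → EuclideanSpace ℝ (Fin d) := fun ω => Θ m ω + γ (m+1) • g (Θ m ω) with ha
    have hz : ∀ (s : ℝ) (ω : Ω), a ω + s • (γ (m+1) • D (m+1) ω)
        = Θ m ω + γ (m+1) • (g (Θ m ω) + s • D (m+1) ω) := by
      intro s ω; simp only [ha]; module
    have hameas : Measurable a := hXm.add ((hg.comp hXm).const_smul (γ (m+1)))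
    have hFcont : ∀ ω, Continuous fun s => F s ω := by
      intro ω
      have hline : Continuous fun s : ℝ => Θ m ω + γ (m+1) • (g (Θ m ω) + s • D (m+1) ω) :=
        continuous_const.add
          ((continuous_const.add (continuous_id.smul continuous_const)).const_smul (γ (m+1)))
      exact (hfc.comp hline).clm_apply continuous_const
    -- pointwise FTC
    have hpt : ∀ ω, V (Θ (m+1) ω) = V (a ω) + γ (m+1) * ∫ s in (0:ℝ)..1, F s ω := by
      intro ω
      have hderiv : ∀ s ∈ Set.uIcc (0:ℝ) 1,
          HasDerivAt (fun s : ℝ => V (a ω + s • (γ (m+1) • D (m+1) ω))) (γ (m+1) * F s ω) s := by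
        intro s _
        have hl : HasDerivAt (fun s : ℝ => a ω + s • (γ (m+1) • D (m+1) ω))
            (γ (m+1) • D (m+1) ω) s := by
          simpa using ((hasDerivAt_id s).smul_const (γ (m+1) • D (m+1) ω)).const_add (a ω)
        have h2' := HasFDerivAt.comp_hasDerivAt s
          ((hVdiff (a ω + s • (γ (m+1) • D (m+1) ω))).hasFDerivAt) hl
        have h3'' : (fderiv ℝ V (a ω + s • (γ (m+1) • D (m+1) ω))) (γ (m+1) • D (m+1) ω)
            = γ (m+1) * F s ω := by
          rw [hz s ω]; simp [hF, ContinuousLinearMap.map_smul, smul_eq_mul]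
        rw [h3''] at h2'
        exact h2'
      have hint : IntervalIntegrable (fun s => γ (m+1) * F s ω) volume 0 1 :=
        (continuous_const.mul (hFcont ω)).intervalIntegrable _ _
      have heq := intervalIntegral.integral_eq_sub_of_hasDerivAt hderiv hint
      rw [intervalIntegral.integral_const_mul] at heq
      have h0 : a ω + (0:ℝ) • (γ (m+1) • D (m+1) ω) = a ω := by simp
      have h1' : a ω + (1:ℝ) • (γ (m+1) • D (m+1) ω) = Θ (m+1) ω := by
        rw [hΘ (m+1) h1le ω]; simp only [Nat.add_sub_cancel, ha]; module
      rw [h0, h1'] at heq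
      linarith [heq]
    set IF : Ω → ℝ := fun ω => ∫ s in (0:ℝ)..1, F s ω with hIF
    -- integrability
    have intVa : Integrable (fun ω => V (a ω)) P := by
      refine Integrable.mono ((h1 m).const_mul (1 - c * γ (m+1)))
        ((hVcont.measurable.comp hameas).aestronglyMeasurable) (ae_of_all _ fun ω => ?_)
      rw [Real.norm_eq_abs, Real.norm_eq_abs, abs_of_nonneg (hV_nonneg _)]
      exact le_trans (h3' (m+1) hn (Θ m ω)) (le_abs_self _)
    have intIF : Integrable IF P := by
      have he : IF = fun ω => (γ (m+1))⁻¹ * (V (Θ (m+1) ω) - V (a ω)) := by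
        funext ω; rw [hIF]; simp only; rw [hpt ω]; field_simp; ring
      rw [he]
      exact ((h1 (m+1)).sub intVa).const_mul _
    have intF0 : Integrable (fun ω => F 0 ω) P := by
      have h := h1' (m+1) hn
      simp only [Nat.add_sub_cancel] at h
      exact h.congr (ae_of_all _ fun ω => by simp [hF])
    have hintF0 : ∫ ω, F 0 ω ∂P = 0 := by
      have h := h3 (m+1) hn
      simp only [Nat.add_sub_cancel] at h
      have he0 : (fun ω => F 0 ω)
          = fun ω => fderiv ℝ V (Θ m ω + γ (m+1) • g (Θ m ω)) (D (m+1) ω) := by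
        funext ω; simp [hF]
      rw [he0]
      exact h
    -- split
    have hsplit : ∫ ω, V (Θ (m+1) ω) ∂P
        = (∫ ω, V (a ω) ∂P) + γ (m+1) * ∫ ω, IF ω ∂P := by
      calc ∫ ω, V (Θ (m+1) ω) ∂P = ∫ ω, (V (a ω) + γ (m+1) * IF ω) ∂P :=
            integral_congr_ae (ae_of_all _ fun ω => hpt ω)
        _ = (∫ ω, V (a ω) ∂P) + ∫ ω, γ (m+1) * IF ω ∂P :=
            integral_add intVa (intIF.const_mul _)
        _ = _ := by rw [integral_const_mul]
    have hVa_le : ∫ ω, V (a ω) ∂P ≤ (1 - c * γ (m+1)) * ∫ ω, V (Θ m ω) ∂P := by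
      calc ∫ ω, V (a ω) ∂P ≤ ∫ ω, (1 - c * γ (m+1)) * V (Θ m ω) ∂P :=
            integral_mono intVa ((h1 m).const_mul _) (fun ω => h3' (m+1) hn (Θ m ω))
        _ = _ := integral_const_mul _ _
    -- bound on ∫ |IF - F0|
    have hVint_nonneg : (0:ℝ) ≤ ∫ ω, V (Θ m ω) ∂P := integral_nonneg fun ω => hV_nonneg _
    have hκnn : (0:ℝ) ≤ κ * (γ (m+1) ^ k + γ (m+1) * ∫ ω, V (Θ m ω) ∂P) :=
      mul_nonneg hκ.le (add_nonneg (Real.rpow_nonneg hγpos.le k)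
        (mul_nonneg hγpos.le hVint_nonneg))
    have hptw : ∀ ω, ENNReal.ofReal |IF ω - F 0 ω|
        ≤ ∫⁻ s in Set.Icc (0:ℝ) 1, ENNReal.ofReal |F s ω - F 0 ω| := by
      intro ω
      have hFi : IntervalIntegrable (fun s => F s ω) volume 0 1 :=
        (hFcont ω).intervalIntegrable _ _
      have e1 : IF ω - F 0 ω = ∫ s in (0:ℝ)..1, (F s ω - F 0 ω) := by
        rw [intervalIntegral.integral_sub hFi (intervalIntegrable_const)]
        simp [hIF]
      have e2 : |IF ω - F 0 ω| ≤ ∫ s in (0:ℝ)..1, |F s ω - F 0 ω| := by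
        rw [e1]; exact intervalIntegral.abs_integral_le_integral_abs zero_le_one
      have habs_cont : Continuous fun s => |F s ω - F 0 ω| :=
        ((hFcont ω).sub continuous_const).abs
      have e3 : ENNReal.ofReal (∫ s in (0:ℝ)..1, |F s ω - F 0 ω|)
          = ∫⁻ s in Set.Ioc (0:ℝ) 1, ENNReal.ofReal |F s ω - F 0 ω| := by
        rw [intervalIntegral.integral_of_le zero_le_one]
        exact ofReal_integral_eq_lintegral_ofReal habs_cont.integrableOn_Ioc
          (ae_of_all _ fun s => abs_nonneg _)
      calc ENNReal.ofReal |IF ω - F 0 ω|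
          ≤ ENNReal.ofReal (∫ s in (0:ℝ)..1, |F s ω - F 0 ω|) := ENNReal.ofReal_le_ofReal e2
        _ = ∫⁻ s in Set.Ioc (0:ℝ) 1, ENNReal.ofReal |F s ω - F 0 ω| := e3
        _ ≤ _ := lintegral_mono_set Set.Ioc_subset_Icc_self
    have hFmeas2 : Measurable fun p : Ω × ℝ => F p.2 p.1 := by
      have hψ : Measurable fun p : Ω × ℝ =>
          Θ m p.1 + γ (m+1) • (g (Θ m p.1) + p.2 • D (m+1) p.1) :=
        (hXm.comp measurable_fst).add
          ((((hg.comp (hXm.comp measurable_fst)).add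
            (measurable_snd.smul (hDm.comp measurable_fst))).const_smul (γ (m+1))))
      have happ : Continuous fun q : (EuclideanSpace ℝ (Fin d)) × (EuclideanSpace ℝ (Fin d)) =>
          (fderiv ℝ V q.1) q.2 := (hfc.comp continuous_fst).clm_apply continuous_snd
      exact happ.measurable.comp (hψ.prodMk (hDm.comp measurable_fst))
    have hF0meas : Measurable fun ω => F 0 ω :=
      hFmeas2.comp (measurable_id.prodMk measurable_const)
    have hG : Measurable (Function.uncurry fun (ω : Ω) (s : ℝ) =>
        ENNReal.ofReal |F s ω - F 0 ω|) := by
      exact ((hFmeas2.sub (hF0meas.comp measurable_fst)).abs).ennreal_ofReal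
    have hswap := lintegral_lintegral_swap
      (μ := P) (ν := volume.restrict (Set.Icc (0:ℝ) 1)) hG.aemeasurable
    have hlint : ∫⁻ ω, ENNReal.ofReal |IF ω - F 0 ω| ∂P
        ≤ ENNReal.ofReal (κ * (γ (m+1) ^ k + γ (m+1) * ∫ ω, V (Θ m ω) ∂P)) := by
      calc ∫⁻ ω, ENNReal.ofReal |IF ω - F 0 ω| ∂P
          ≤ ∫⁻ ω, (∫⁻ s in Set.Icc (0:ℝ) 1, ENNReal.ofReal |F s ω - F 0 ω|) ∂P :=
            lintegral_mono hptw
        _ = ∫⁻ s in Set.Icc (0:ℝ) 1, ∫⁻ ω, ENNReal.ofReal |F s ω - F 0 ω| ∂P := hswap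
        _ ≤ ∫⁻ s in Set.Icc (0:ℝ) 1,
            ENNReal.ofReal (κ * (γ (m+1) ^ k + γ (m+1) * ∫ ω, V (Θ m ω) ∂P)) ∂volume := by
            refine setLIntegral_mono measurable_const (fun s hs => ?_)
            have h := h4 (m+1) hn s hs
            simp only [Nat.add_sub_cancel] at h
            refine le_trans (le_of_eq ?_) h
            refine lintegral_congr fun ω => ?_
            simp [hF]
        _ = _ := by
            rw [setLIntegral_const, Real.volume_Icc]
            norm_num
    have hIFabs : ∫ ω, |IF ω - F 0 ω| ∂P
        ≤ κ * (γ (m+1) ^ k + γ (m+1) * ∫ ω, V (Θ m ω) ∂P) := by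
      have hR1 : ENNReal.ofReal (∫ ω, |IF ω - F 0 ω| ∂P)
          = ∫⁻ ω, ENNReal.ofReal |IF ω - F 0 ω| ∂P :=
        ofReal_integral_eq_lintegral_ofReal (intIF.sub intF0).abs
          (ae_of_all _ fun ω => abs_nonneg _)
      calc ∫ ω, |IF ω - F 0 ω| ∂P
          = (ENNReal.ofReal (∫ ω, |IF ω - F 0 ω| ∂P)).toReal :=
            (ENNReal.toReal_ofReal (integral_nonneg fun ω => abs_nonneg _)).symm
        _ ≤ (ENNReal.ofReal (κ * (γ (m+1) ^ k + γ (m+1) * ∫ ω, V (Θ m ω) ∂P))).toReal := by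
            refine ENNReal.toReal_mono ENNReal.ofReal_ne_top ?_
            rw [hR1]; exact hlint
        _ = _ := ENNReal.toReal_ofReal hκnn
    have hIFle : ∫ ω, IF ω ∂P ≤ κ * (γ (m+1) ^ k + γ (m+1) * ∫ ω, V (Θ m ω) ∂P) := by
      have hsub := integral_sub intIF intF0
      have h2' : ∫ ω, (IF ω - F 0 ω) ∂P ≤ ∫ ω, |IF ω - F 0 ω| ∂P :=
        integral_mono (intIF.sub intF0) (intIF.sub intF0).abs fun ω => le_abs_self _
      rw [hsub, hintF0, sub_zero] at h2'
      linarith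
    calc ∫ ω, V (Θ (m+1) ω) ∂P = (∫ ω, V (a ω) ∂P) + γ (m+1) * ∫ ω, IF ω ∂P := hsplit
      _ ≤ (1 - c * γ (m+1)) * (∫ ω, V (Θ m ω) ∂P)
          + γ (m+1) * (κ * (γ (m+1) ^ k + γ (m+1) * ∫ ω, V (Θ m ω) ∂P)) :=
        add_le_add hVa_le (mul_le_mul_of_nonneg_left hIFle hγpos.le)
      _ = _ := by ring
  -- now the induction
  intro n
  have hVnn : ∀ j, (0:ℝ) ≤ ∫ ω, V (Θ j ω) ∂P := fun j => integral_nonneg fun ω => hV_nonneg _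
  set M := max (κ / C) (⨆ l : Fin (N + 1), (∫ ω, V (Θ l ω) ∂P) / γ l ^ k) with hM
  have hbase : ∀ j : ℕ, j ≤ N → ∫ ω, V (Θ j ω) ∂P ≤ M * γ j ^ k := by
    intro j hj
    have hγk : 0 < γ j ^ k := Real.rpow_pos_of_pos (hγ j) k
    have hle : (∫ ω, V (Θ j ω) ∂P) / γ j ^ k ≤ M := by
      refine le_trans ?_ (le_max_right _ _)
      exact le_ciSup (f := fun l : Fin (N+1) => (∫ ω, V (Θ l ω) ∂P) / γ l ^ k)
        (Set.Finite.bddAbove (Set.finite_range _)) ⟨j, Nat.lt_succ_of_le hj⟩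
    calc ∫ ω, V (Θ j ω) ∂P = ((∫ ω, V (Θ j ω) ∂P) / γ j ^ k) * γ j ^ k :=
          (div_mul_cancel₀ _ hγk.ne').symm
      _ ≤ M * γ j ^ k := mul_le_mul_of_nonneg_right hle hγk.le
  have hMpos : 0 < M := lt_of_lt_of_le (div_pos hκ hC) (le_max_left _ _)
  induction n with
  | zero => exact hbase 0 (Nat.zero_le N)
  | succ m ih =>
    rcases le_or_gt (m+1) N with hmN | hmN
    · exact hbase (m+1) hmN
    · have hkey := key m hmN
      have hγn : 0 < γ (m+1) := hγ _
      have hq : 0 < γ (m+1) ^ k := Real.rpow_pos_of_pos (hγ _) k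
      have hp : 0 < γ m ^ k := Real.rpow_pos_of_pos (hγ _) k
      have hA : (0:ℝ) ≤ ∫ ω, V (Θ m ω) ∂P := hVnn m
      have hmin := h5 (m+1) hmN
      have hκγ : κ * γ (m+1) ≤ c / 2 := by
        have h := le_trans hmin (min_le_left _ _)
        rw [le_div_iff₀ (by positivity)] at h
        linarith
      have hcγ : c * γ (m+1) ≤ 2 := by
        have h := le_trans hmin (min_le_right _ _)
        rw [le_div_iff₀ hc] at h
        linarith
      have hCle : C ≤ (γ (m+1) ^ k - γ m ^ k) / γ (m+1) ^ (k+1)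
          + c * γ m ^ k / (2 * γ (m+1) ^ k) := by
        have hmem : ((γ (m+1) ^ k - γ m ^ k) / γ (m+1) ^ (k+1)
            + c * γ m ^ k / (2 * γ (m+1) ^ k)) ∈ {x : ℝ | ∃ l : ℕ, N < l ∧
          x = (γ l ^ k - γ (l - 1) ^ k) / γ l ^ (k + 1)
            + c * γ (l - 1) ^ k / (2 * γ l ^ k)} := ⟨m+1, hmN, by simp⟩
        have hbdd : BddBelow {x : ℝ | ∃ l : ℕ, N < l ∧
          x = (γ l ^ k - γ (l - 1) ^ k) / γ l ^ (k + 1)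
            + c * γ (l - 1) ^ k / (2 * γ l ^ k)} := by
          by_contra hb
          have := hC
          rw [hCdef, Real.sInf_of_not_bddBelow hb] at this
          exact lt_irrefl 0 this
        rw [hCdef]
        exact csInf_le hbdd hmem
      have hγk1 : γ (m+1) ^ (k+1) = γ (m+1) ^ k * γ (m+1) := by
        rw [Real.rpow_add hγn, Real.rpow_one]
      have hκC : κ ≤ M * C := by
        have := le_max_left (κ / C) (⨆ l : Fin (N + 1), (∫ ω, V (Θ l ω) ∂P) / γ l ^ k)
        rw [← hM] at this
        exact (div_le_iff₀ hC).mp this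
      have hκbr : κ ≤ M * ((γ (m+1) ^ k - γ m ^ k) / (γ (m+1) ^ k * γ (m+1))
          + c * γ m ^ k / (2 * γ (m+1) ^ k)) := by
        refine le_trans hκC (mul_le_mul_of_nonneg_left ?_ hMpos.le)
        rw [← hγk1]
        exact hCle
      have hbr2 : κ * (γ (m+1) * γ (m+1) ^ k)
          ≤ M * ((γ (m+1) ^ k - γ m ^ k) + c * γ (m+1) * γ m ^ k / 2) := by
        have h := mul_le_mul_of_nonneg_right hκbr (mul_pos hγn hq).le
        calc κ * (γ (m+1) * γ (m+1) ^ k)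
            ≤ M * ((γ (m+1) ^ k - γ m ^ k) / (γ (m+1) ^ k * γ (m+1))
              + c * γ m ^ k / (2 * γ (m+1) ^ k)) * (γ (m+1) * γ (m+1) ^ k) := by
              linarith [h]
          _ = M * ((γ (m+1) ^ k - γ m ^ k) + c * γ (m+1) * γ m ^ k / 2) := by
              field_simp
      have ha2 : 1 - c * γ (m+1) + κ * γ (m+1) ^ 2 ≤ 1 - c * γ (m+1) / 2 := by
        nlinarith [mul_le_mul_of_nonneg_right hκγ hγn.le]
      have step1 : (1 - c * γ (m+1) + κ * γ (m+1) ^ 2) * (∫ ω, V (Θ m ω) ∂P)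
          ≤ (1 - c * γ (m+1) / 2) * (M * γ m ^ k) := by
        have hMp : (0:ℝ) ≤ M * γ m ^ k := mul_nonneg hMpos.le hp.le
        have hc2 : (0:ℝ) ≤ 1 - c * γ (m+1) / 2 := by linarith
        rcases le_or_gt (1 - c * γ (m+1) + κ * γ (m+1) ^ 2) 0 with h | h
        · nlinarith
        · calc (1 - c * γ (m+1) + κ * γ (m+1) ^ 2) * (∫ ω, V (Θ m ω) ∂P)
              ≤ (1 - c * γ (m+1) + κ * γ (m+1) ^ 2) * (M * γ m ^ k) :=
                mul_le_mul_of_nonneg_left ih h.le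
            _ ≤ (1 - c * γ (m+1) / 2) * (M * γ m ^ k) :=
                mul_le_mul_of_nonneg_right ha2 hMp
      calc ∫ ω, V (Θ (m+1) ω) ∂P
          ≤ (1 - c * γ (m+1)) * (∫ ω, V (Θ m ω) ∂P)
            + κ * γ (m+1) * (γ (m+1) ^ k + γ (m+1) * ∫ ω, V (Θ m ω) ∂P) := hkey
        _ = (1 - c * γ (m+1) + κ * γ (m+1) ^ 2) * (∫ ω, V (Θ m ω) ∂P)
            + κ * (γ (m+1) * γ (m+1) ^ k) := by ring
        _ ≤ (1 - c * γ (m+1) / 2) * (M * γ m ^ k)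
            + M * ((γ (m+1) ^ k - γ m ^ k) + c * γ (m+1) * γ m ^ k / 2) :=
            add_le_add step1 hbr2
        _ = M * γ (m+1) ^ k := by ring
end

section
/- Let N ∈ ℕ₀, k, κ, c, C ∈ (0,∞), let (e_n)_{n∈ℕ₀} ⊆ [0,∞) and (γ_n)_{n∈ℕ₀} ⊆ (0,∞) satisfy for all n ∈ ℕ with n > N that e_n ≤ (1 − cγ_n)e_{n−1} + κ(γ_n)^{k+1}, that sup_{l ∈ ℕ, l > N} γ_l ≤ 1/c, and that C = inf_{l ∈ ℕ, l > N}[((γ_l)^k − (γ_{l−1})^k)/(γ_l)^{k+1} + c(γ_{l−1})^k/(γ_l)^k]. Then for all n ∈ ℕ₀ it holds that e_n ≤ max{e₀/(γ₀)^k, e₁/(γ₁)^k, ..., e_N/(γ_N)^k, κ/C} · (γ_n)^k. -/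
open MeasureTheory ProbabilityTheory Filter

/-- **Gronwall-type inequality** (Lemma 2.15). -/
theorem stmt_7 (N : ℕ) (k κ c C : ℝ) (hk : 0 < k) (hκ : 0 < κ) (hc : 0 < c) (hC : 0 < C)
    (e γ : ℕ → ℝ) (he : ∀ n, 0 ≤ e n) (hγ : ∀ n, 0 < γ n)
    (hrec : ∀ n : ℕ, N < n → e n ≤ (1 - c * γ n) * e (n - 1) + κ * γ n ^ (k + 1))
    (hsup : ∀ l : ℕ, N < l → γ l ≤ 1 / c)
    (hCdef : C = sInf {x : ℝ | ∃ l : ℕ, N < l ∧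
      x = (γ l ^ k - γ (l - 1) ^ k) / γ l ^ (k + 1) + c * γ (l - 1) ^ k / γ l ^ k}) :
    ∀ n : ℕ, e n ≤ max (⨆ l : Fin (N + 1), e l / γ l ^ k) (κ / C) * γ n ^ k := by
  set M := max (⨆ l : Fin (N + 1), e l / γ l ^ k) (κ / C) with hM
  have hMpos : 0 < M := lt_of_lt_of_le (div_pos hκ hC) (le_max_right _ _)
  set S : Set ℝ := {x : ℝ | ∃ l : ℕ, N < l ∧
      x = (γ l ^ k - γ (l - 1) ^ k) / γ l ^ (k + 1) + c * γ (l - 1) ^ k / γ l ^ k} with hS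
  have hbdd : BddBelow S := by
    by_contra h
    rw [Real.sInf_of_not_bddBelow h] at hCdef
    exact absurd hCdef hC.ne'
  have hCle : ∀ l : ℕ, N < l →
      C ≤ (γ l ^ k - γ (l - 1) ^ k) / γ l ^ (k + 1) + c * γ (l - 1) ^ k / γ l ^ k := by
    intro l hl
    rw [hCdef]
    exact csInf_le hbdd ⟨l, hl, rfl⟩
  have hbase : ∀ n : ℕ, n ≤ N → e n ≤ M * γ n ^ k := by
    intro n hn
    have hpow : (0:ℝ) < γ n ^ k := Real.rpow_pos_of_pos (hγ n) k
    have h1 : e n / γ n ^ k ≤ ⨆ l : Fin (N + 1), e l / γ l ^ k := by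
      have := le_ciSup (f := fun l : Fin (N + 1) => e l / γ l ^ k) (Set.Finite.bddAbove (Set.finite_range _))
        (⟨n, Nat.lt_succ_of_le hn⟩ : Fin (N + 1))
      simpa using this
    have h2 : e n / γ n ^ k ≤ M := h1.trans (le_max_left _ _)
    calc e n = (e n / γ n ^ k) * γ n ^ k := by field_simp
    _ ≤ M * γ n ^ k := by exact mul_le_mul_of_nonneg_right h2 hpow.le
  intro n
  induction n with
  | zero => exact hbase 0 (Nat.zero_le N)
  | succ n ih =>
    by_cases hn : n + 1 ≤ N
    · exact hbase (n + 1) hn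
    have hN : N < n + 1 := Nat.lt_of_not_le hn
    have hrec' := hrec (n + 1) hN
    simp only [Nat.add_sub_cancel] at hrec'
    set g := γ (n + 1) with hg
    have hgpos := hγ (n + 1)
    have hx : (0:ℝ) < g ^ k := Real.rpow_pos_of_pos hgpos k
    have hx' : (0:ℝ) < γ n ^ k := Real.rpow_pos_of_pos (hγ n) k
    have hgk1 : g ^ (k + 1) = g ^ k * g := by
      rw [Real.rpow_add hgpos, Real.rpow_one]
    have hgk1pos : (0:ℝ) < g ^ (k + 1) := Real.rpow_pos_of_pos hgpos _
    have hcg : 1 - c * g ≥ 0 := by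
      have := hsup (n + 1) hN
      have : c * g ≤ 1 := by
        rw [div_eq_inv_mul, mul_one] at this
        calc c * g ≤ c * c⁻¹ := mul_le_mul_of_nonneg_left this hc.le
        _ = 1 := mul_inv_cancel₀ hc.ne'
      linarith
    have hCle' := hCle (n + 1) hN
    simp only [Nat.add_sub_cancel] at hCle'
    -- multiply hCle' by g^(k+1)
    have key : C * g ^ (k + 1) ≤ g ^ k - γ n ^ k + c * γ n ^ k * g := by
      have h1 : ((g ^ k - γ n ^ k) / g ^ (k + 1) + c * γ n ^ k / g ^ k) * g ^ (k + 1)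
          = g ^ k - γ n ^ k + c * γ n ^ k * g := by
        rw [hgk1]; field_simp
        linear_combination (g ^ k - γ n ^ k) * (mul_inv_cancel₀ (show g ≠ 0 from hgpos.ne'))
      calc C * g ^ (k + 1)
          ≤ ((g ^ k - γ n ^ k) / g ^ (k + 1) + c * γ n ^ k / g ^ k) * g ^ (k + 1) :=
            mul_le_mul_of_nonneg_right hCle' hgk1pos.le
        _ = _ := h1
    have hκM : κ ≤ M * C := by
      have : κ / C ≤ M := le_max_right _ _
      calc κ = (κ / C) * C := by field_simp
      _ ≤ M * C := mul_le_mul_of_nonneg_right this hC.le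
    have hκg : κ * g ^ (k + 1) ≤ M * (g ^ k - γ n ^ k + c * γ n ^ k * g) := by
      calc κ * g ^ (k + 1) ≤ (M * C) * g ^ (k + 1) :=
            mul_le_mul_of_nonneg_right hκM hgk1pos.le
      _ = M * (C * g ^ (k + 1)) := by ring
      _ ≤ M * (g ^ k - γ n ^ k + c * γ n ^ k * g) :=
            mul_le_mul_of_nonneg_left key hMpos.le
    have step : (1 - c * g) * e n ≤ (1 - c * g) * (M * γ n ^ k) :=
      mul_le_mul_of_nonneg_left ih hcg
    nlinarith [hrec', step, hκg]
end

section
/- Let d ∈ ℕ, ϑ ∈ ℝ^d, let ⟨·,·⟩ be a scalar product on ℝ^d with induced norm ‖·‖, and let g : ℝ^d → ℝ^d be a function. Then the following five statements are equivalent: (i) there exists c ∈ (0,∞) such that for all θ ∈ ℝ^d it holds that ⟨θ − ϑ, g(θ)⟩ ≤ −c·max{‖θ−ϑ‖², ‖g(θ)‖²}; (ii) there exist c, ϱ ∈ (0,∞) such that for all θ ∈ ℝ^d it holds that ‖θ + ϱ g(θ) − ϑ‖² ≤ (1 − cϱ)‖θ − ϑ‖²; (iii) there exist c, ϱ ∈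 (0,∞) such that for all θ ∈ ℝ^d and r ∈ [0,ϱ] it holds that ‖θ + r g(θ) − ϑ‖² ≤ (1 − cr)‖θ − ϑ‖²; (iv) g(ϑ) = 0 and inf_{r ∈ (0,∞)} sup_{θ ∈ ℝ^d∖{ϑ}} [‖θ + r g(θ) − ϑ‖²/‖θ − ϑ‖²] < 1; (v) g(ϑ) = 0 and inf_{r ∈ (0,∞)} sup_{θ ∈ ℝ^d∖{ϑ}} [(2⟨θ − ϑ, g(θ)⟩ + r‖g(θ)‖²)/‖θ − ϑ‖²] < 0. -/
open scoped RealInnerProductSpace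

private lemma ereal_sup_lt {ι : Type*} [Nonempty ι] {f : ι → ℝ} {b : ℝ}
    (h : (⨆ i, (f i : EReal)) < (b : EReal)) : ∃ s : ℝ, s < b ∧ ∀ i, f i ≤ s := by
  set S := ⨆ i, (f i : EReal) with hS
  have hne : S ≠ ⊥ := by
    obtain ⟨i⟩ := ‹Nonempty ι›
    exact fun hb => absurd (le_iSup (fun i => (f i : EReal)) i) (by simp [← hS, hb])
  have hnt : S ≠ ⊤ := h.ne_top
  refine ⟨S.toReal, ?_, fun i => ?_⟩
  · rw [← EReal.coe_lt_coe_iff]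
    rwa [EReal.coe_toReal hnt hne]
  · rw [← EReal.coe_le_coe_iff, EReal.coe_toReal hnt hne]
    exact le_iSup (fun i => (f i : EReal)) i

private lemma norm_expand {E : Type*} [NormedAddCommGroup E] [InnerProductSpace ℝ E]
    (ϑ θ v : E) (r : ℝ) :
    ‖θ + r • v - ϑ‖ ^ 2 = ‖θ - ϑ‖ ^ 2 + r * (2 * ⟪θ - ϑ, v⟫ + r * ‖v‖ ^ 2) := by
  have h : θ + r • v - ϑ = (θ - ϑ) + r • v := by abel
  rw [h, norm_add_sq_real, real_inner_smul_right, norm_smul, Real.norm_eq_abs,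
    mul_pow, sq_abs]
  ring

/-- **Equivalence of stability-type properties** (Proposition 2.13). -/
theorem stmt_9 {E : Type*} [NormedAddCommGroup E] [InnerProductSpace ℝ E]
    [FiniteDimensional ℝ E] (d : ℕ) (hd : 0 < d) (hdim : Module.finrank ℝ E = d)
    (ϑ : E) (g : E → E) :
    List.TFAE [
      (∃ c : ℝ, 0 < c ∧ ∀ θ : E,
        ⟪θ - ϑ, g θ⟫ ≤ -c * max (‖θ - ϑ‖ ^ 2) (‖g θ‖ ^ 2)),
      (∃ c ϱ : ℝ, 0 < c ∧ 0 < ϱ ∧ ∀ θ : E,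
        ‖θ + ϱ • g θ - ϑ‖ ^ 2 ≤ (1 - c * ϱ) * ‖θ - ϑ‖ ^ 2),
      (∃ c ϱ : ℝ, 0 < c ∧ 0 < ϱ ∧ ∀ θ : E, ∀ r ∈ Set.Icc (0 : ℝ) ϱ,
        ‖θ + r • g θ - ϑ‖ ^ 2 ≤ (1 - c * r) * ‖θ - ϑ‖ ^ 2),
      (g ϑ = 0 ∧
        (⨅ r : {r : ℝ // 0 < r}, ⨆ θ : {θ : E // θ ≠ ϑ},
          ((‖(θ : E) + (r : ℝ) • g (θ : E) - ϑ‖ ^ 2 / ‖(θ : E) - ϑ‖ ^ 2 : ℝ) : EReal)) < 1),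
      (g ϑ = 0 ∧
        (⨅ r : {r : ℝ // 0 < r}, ⨆ θ : {θ : E // θ ≠ ϑ},
          (((2 * ⟪(θ : E) - ϑ, g (θ : E)⟫ + (r : ℝ) * ‖g (θ : E)‖ ^ 2) /
              ‖(θ : E) - ϑ‖ ^ 2 : ℝ) : EReal)) < 0)
    ] := by
  have hnt : Nontrivial E := by
    have : 0 < Module.finrank ℝ E := hdim ▸ hd
    exact Module.nontrivial_of_finrank_pos this
  have hne : Nonempty {θ : E // θ ≠ ϑ} := nonempty_subtype.mpr (exists_ne ϑ)
  tfae_have 1 → 3 := by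
    rintro ⟨c, hc, h⟩
    refine ⟨c, c, hc, hc, fun θ r hr => ?_⟩
    obtain ⟨hr0, hrc⟩ := hr
    have hA : (0:ℝ) ≤ ‖θ - ϑ‖ ^ 2 := sq_nonneg _
    have hB : (0:ℝ) ≤ ‖g θ‖ ^ 2 := sq_nonneg _
    have hmA : ‖θ - ϑ‖ ^ 2 ≤ max (‖θ - ϑ‖ ^ 2) (‖g θ‖ ^ 2) := le_max_left _ _
    have hmB : ‖g θ‖ ^ 2 ≤ max (‖θ - ϑ‖ ^ 2) (‖g θ‖ ^ 2) := le_max_right _ _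
    have := h θ
    rw [norm_expand]
    nlinarith [mul_le_mul_of_nonneg_left this hr0,
      mul_nonneg (mul_nonneg hr0 hB) (sub_nonneg.mpr hrc),
      mul_nonneg (mul_nonneg hc.le hr0) (sub_nonneg.mpr hmB),
      mul_nonneg (mul_nonneg hc.le hr0) (sub_nonneg.mpr hmA)]
  tfae_have 3 → 2 := by
    rintro ⟨c, ϱ, hc, hϱ, h⟩
    exact ⟨c, ϱ, hc, hϱ, fun θ => h θ ϱ ⟨hϱ.le, le_refl _⟩⟩
  tfae_have 2 → 4 := by
    rintro ⟨c, ϱ, hc, hϱ, h⟩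
    have hg : g ϑ = 0 := by
      have := h ϑ
      simp only [sub_self, norm_zero] at this
      have h0 : ‖ϑ + ϱ • g ϑ - ϑ‖ ^ 2 ≤ 0 := by simpa using this
      have h1 : ϑ + ϱ • g ϑ - ϑ = ϱ • g ϑ := by abel
      rw [h1] at h0
      have := sq_nonneg ‖ϱ • g ϑ‖
      have h2 : ‖ϱ • g ϑ‖ ^ 2 = 0 := le_antisymm h0 this
      have h3 : ϱ • g ϑ = 0 := by
        rwa [pow_eq_zero_iff (by norm_num), norm_eq_zero] at h2
      exact (smul_eq_zero.mp h3).resolve_left hϱ.ne'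
    refine ⟨hg, ?_⟩
    have key : (⨆ θ : {θ : E // θ ≠ ϑ},
        ((‖(θ : E) + ϱ • g (θ : E) - ϑ‖ ^ 2 / ‖(θ : E) - ϑ‖ ^ 2 : ℝ) : EReal))
        ≤ ((1 - c * ϱ : ℝ) : EReal) := by
      refine iSup_le fun θ => ?_
      rw [EReal.coe_le_coe_iff]
      have hA : (0:ℝ) < ‖(θ : E) - ϑ‖ ^ 2 := by
        exact pow_pos (norm_pos_iff.mpr (sub_ne_zero.mpr θ.2)) 2
      rw [div_le_iff₀ hA]
      exact h θ
    calc (⨅ r : {r : ℝ // 0 < r}, ⨆ θ : {θ : E // θ ≠ ϑ},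
          ((‖(θ : E) + (r : ℝ) • g (θ : E) - ϑ‖ ^ 2 / ‖(θ : E) - ϑ‖ ^ 2 : ℝ) : EReal))
        ≤ ((1 - c * ϱ : ℝ) : EReal) := iInf_le_of_le ⟨ϱ, hϱ⟩ key
      _ < 1 := by
          rw [← EReal.coe_one, EReal.coe_lt_coe_iff]
          nlinarith
  tfae_have 4 → 5 := by
    rintro ⟨hg, h⟩
    refine ⟨hg, ?_⟩
    rw [iInf_lt_iff] at h
    obtain ⟨⟨r, hr⟩, hsup⟩ := h
    rw [← EReal.coe_one] at hsup
    obtain ⟨s, hs1, hs⟩ := ereal_sup_lt hsup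
    have key : ∀ θ : {θ : E // θ ≠ ϑ},
        (2 * ⟪(θ : E) - ϑ, g (θ : E)⟫ + r * ‖g (θ : E)‖ ^ 2) / ‖(θ : E) - ϑ‖ ^ 2
          ≤ (s - 1) / r := by
      intro θ
      have hA : (0:ℝ) < ‖(θ : E) - ϑ‖ ^ 2 := by
        exact pow_pos (norm_pos_iff.mpr (sub_ne_zero.mpr θ.2)) 2
      have h1 := hs θ
      rw [norm_expand ϑ (θ : E) (g (θ : E)) r] at h1
      rw [div_le_div_iff₀ hA hr, div_le_iff₀ hA] at *
      nlinarith [h1]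
    rw [iInf_lt_iff]
    refine ⟨⟨r, hr⟩, lt_of_le_of_lt (iSup_le fun θ => EReal.coe_le_coe_iff.mpr (key θ)) ?_⟩
    rw [← EReal.coe_zero, EReal.coe_lt_coe_iff]
    have : s - 1 < 0 := by linarith
    exact div_neg_of_neg_of_pos this hr
  tfae_have 5 → 1 := by
    rintro ⟨hg, h⟩
    rw [iInf_lt_iff] at h
    obtain ⟨⟨r, hr⟩, hsup⟩ := h
    rw [← EReal.coe_zero] at hsup
    obtain ⟨s, hs0, hs⟩ := ereal_sup_lt hsup
    have hmpos0 : (0:ℝ) < min (-s) r := lt_min (by linarith) hr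
    refine ⟨min (-s) r / 2, by linarith, fun θ => ?_⟩
    by_cases hθ : θ = ϑ
    · subst hθ
      simp [hg]
    · have hA : (0:ℝ) < ‖θ - ϑ‖ ^ 2 := by
        exact pow_pos (norm_pos_iff.mpr (sub_ne_zero.mpr hθ)) 2
      have h1 := hs ⟨θ, hθ⟩
      simp only at h1
      rw [div_le_iff₀ hA] at h1
      have h2 : 2 * ⟪θ - ϑ, g θ⟫ + r * ‖g θ‖ ^ 2 ≤ -(-s) * ‖θ - ϑ‖ ^ 2 := by
        rw [neg_neg]; exact h1
      have hB : (0:ℝ) ≤ ‖g θ‖ ^ 2 := sq_nonneg _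
      have hm1 : min (-s) r ≤ -s := min_le_left _ _
      have hm2 : min (-s) r ≤ r := min_le_right _ _
      have hmpos : 0 < min (-s) r := lt_min (by linarith) hr
      rcases le_total (‖θ - ϑ‖ ^ 2) (‖g θ‖ ^ 2) with hmax | hmax
      · rw [max_eq_right hmax]
        nlinarith
      · rw [max_eq_left hmax]
        nlinarith
  tfae_finish
end

section
/- Let d ∈ ℕ, ϑ ∈ ℝ^d, c₁, c₂ ∈ (0,∞), let ⟨·,·⟩ be a scalar product on ℝ^d with induced norm ‖·‖, and let g : ℝ^d → ℝ^d satisfy for all θ ∈ ℝ^d that ⟨θ − ϑ, g(θ)⟩ ≤ −max{c₁‖θ−ϑ‖², c₂‖g(θ)‖²}. Then (i) {θ ∈ ℝ^d : g(θ) = 0} = {ϑ}, (ii) c₁c₂ ≤ 1, (iii) for all θ ∈ ℝ^d it holds that c₁‖θ−ϑ‖ ≤ ‖g(θ)‖ ≤ (1/c₂)‖θ−ϑ‖, (iv) for all θ ∈ ℝ^d and r ∈ [0, 2c₂] it holds that ‖θ + r g(θ) − ϑ‖² ≤ (1 − c₁r(2 − r/c₂))‖θ−ϑ‖², and (v) for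 all θ ∈ ℝ^d and r ∈ [0, c₂] it holds that ‖θ + r g(θ) − ϑ‖² ≤ (1 − c₁r)‖θ−ϑ‖². -/
open scoped RealInnerProductSpace

/-- **Properties of coercivity-type conditions** (Lemma 2.8, `fcond`). -/
theorem stmt_10 {E : Type*} [NormedAddCommGroup E] [InnerProductSpace ℝ E]
    [FiniteDimensional ℝ E] (d : ℕ) (hd : 0 < d) (hdim : Module.finrank ℝ E = d)
    (ϑ : E) (c₁ c₂ : ℝ) (hc₁ : 0 < c₁) (hc₂ : 0 < c₂) (g : E → E)
    (hg : ∀ θ : E, ⟪θ - ϑ, g θ⟫ ≤ -max (c₁ * ‖θ - ϑ‖ ^ 2) (c₂ * ‖g θ‖ ^ 2)) :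
    {θ : E | g θ = 0} = {ϑ} ∧
    c₁ * c₂ ≤ 1 ∧
    (∀ θ : E, c₁ * ‖θ - ϑ‖ ≤ ‖g θ‖ ∧ ‖g θ‖ ≤ (1 / c₂) * ‖θ - ϑ‖) ∧
    (∀ θ : E, ∀ r ∈ Set.Icc (0 : ℝ) (2 * c₂),
      ‖θ + r • g θ - ϑ‖ ^ 2 ≤ (1 - c₁ * r * (2 - r / c₂)) * ‖θ - ϑ‖ ^ 2) ∧
    (∀ θ : E, ∀ r ∈ Set.Icc (0 : ℝ) c₂,
      ‖θ + r • g θ - ϑ‖ ^ 2 ≤ (1 - c₁ * r) * ‖θ - ϑ‖ ^ 2) := by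
  have h1 : ∀ θ : E, ⟪θ - ϑ, g θ⟫ ≤ -(c₁ * ‖θ - ϑ‖ ^ 2) := fun θ =>
    (hg θ).trans (neg_le_neg (le_max_left _ _))
  have h2 : ∀ θ : E, ⟪θ - ϑ, g θ⟫ ≤ -(c₂ * ‖g θ‖ ^ 2) := fun θ =>
    (hg θ).trans (neg_le_neg (le_max_right _ _))
  have hcs : ∀ θ : E, -(‖θ - ϑ‖ * ‖g θ‖) ≤ ⟪θ - ϑ, g θ⟫ := fun θ =>
    neg_le_of_abs_le (abs_real_inner_le_norm _ _)
  -- (iii)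
  have hiii : ∀ θ : E, c₁ * ‖θ - ϑ‖ ≤ ‖g θ‖ ∧ ‖g θ‖ ≤ (1 / c₂) * ‖θ - ϑ‖ := by
    intro θ
    constructor
    · rcases eq_or_lt_of_le (norm_nonneg (θ - ϑ)) with h | h
      · rw [← h]; simpa using norm_nonneg (g θ)
      · have := (hcs θ).trans (h1 θ)
        have h' : c₁ * ‖θ - ϑ‖ ^ 2 ≤ ‖θ - ϑ‖ * ‖g θ‖ := by linarith
        rw [sq] at h'
        nlinarith
    · rcases eq_or_lt_of_le (norm_nonneg (g θ)) with h | h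
      · rw [← h]; positivity
      · have := (hcs θ).trans (h2 θ)
        have h' : c₂ * ‖g θ‖ ^ 2 ≤ ‖θ - ϑ‖ * ‖g θ‖ := by linarith
        rw [sq] at h'
        rw [div_mul_eq_mul_div, le_div_iff₀ hc₂]
        nlinarith
  -- (i)
  have hi : {θ : E | g θ = 0} = {ϑ} := by
    ext θ
    simp only [Set.mem_setOf_eq, Set.mem_singleton_iff]
    constructor
    · intro h
      have := h1 θ
      rw [h, inner_zero_right] at this
      have hsq : ‖θ - ϑ‖ ^ 2 = 0 := le_antisymm (by nlinarith) (sq_nonneg _)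
      have hn : ‖θ - ϑ‖ = 0 := by
        have := sq_abs ‖θ - ϑ‖ ▸ hsq
        nlinarith [norm_nonneg (θ - ϑ), sq_nonneg ‖θ - ϑ‖, sq_nonneg (‖θ - ϑ‖ - 1)]
      have := norm_eq_zero.mp hn
      rwa [sub_eq_zero] at this
    · intro h
      rw [h]
      have := h2 ϑ
      rw [sub_self, inner_zero_left] at this
      have hsq : ‖g ϑ‖ ^ 2 = 0 := le_antisymm (by nlinarith) (sq_nonneg _)
      exact norm_eq_zero.mp (pow_eq_zero_iff (by norm_num : (2:ℕ) ≠ 0) |>.mp hsq)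
  -- (ii)
  have hnt : Nontrivial E := by
    have : 0 < Module.finrank ℝ E := hdim ▸ hd
    exact Module.nontrivial_of_finrank_pos this
  obtain ⟨x, hx⟩ := exists_ne ϑ
  have hxpos : 0 < ‖x - ϑ‖ := by
    rw [norm_pos_iff, sub_ne_zero]; exact hx
  have hii : c₁ * c₂ ≤ 1 := by
    obtain ⟨ha, hb⟩ := hiii x
    have : c₁ * ‖x - ϑ‖ ≤ (1 / c₂) * ‖x - ϑ‖ := ha.trans hb
    have h' : c₁ ≤ 1 / c₂ := le_of_mul_le_mul_right (by linarith) hxpos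
    rw [le_div_iff₀ hc₂] at h'
    linarith
  -- (iv)
  have hiv : ∀ θ : E, ∀ r ∈ Set.Icc (0 : ℝ) (2 * c₂),
      ‖θ + r • g θ - ϑ‖ ^ 2 ≤ (1 - c₁ * r * (2 - r / c₂)) * ‖θ - ϑ‖ ^ 2 := by
    intro θ r hr
    obtain ⟨hr0, hr2⟩ := hr
    have hexp : ‖θ + r • g θ - ϑ‖ ^ 2
        = ‖θ - ϑ‖ ^ 2 + 2 * (r * ⟪θ - ϑ, g θ⟫) + r ^ 2 * ‖g θ‖ ^ 2 := by
      have : θ + r • g θ - ϑ = (θ - ϑ) + r • g θ := by abel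
      rw [this, norm_add_sq_real, real_inner_smul_right, norm_smul,
        Real.norm_eq_abs, mul_pow, sq_abs]
    rw [hexp]
    have hcoef : 0 ≤ 2 * r - r ^ 2 / c₂ := by
      rw [sub_nonneg, div_le_iff₀ hc₂, sq]
      nlinarith
    have e1 : (2 * r - r ^ 2 / c₂) * ⟪θ - ϑ, g θ⟫ ≤
        (2 * r - r ^ 2 / c₂) * (-(c₁ * ‖θ - ϑ‖ ^ 2)) :=
      mul_le_mul_of_nonneg_left (h1 θ) hcoef
    have e2 : (r ^ 2 / c₂) * ⟪θ - ϑ, g θ⟫ ≤ (r ^ 2 / c₂) * (-(c₂ * ‖g θ‖ ^ 2)) :=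
      mul_le_mul_of_nonneg_left (h2 θ) (by positivity)
    have e3 : (r ^ 2 / c₂) * (c₂ * ‖g θ‖ ^ 2) = r ^ 2 * ‖g θ‖ ^ 2 := by
      field_simp
    have hs1 : (2 * r - r ^ 2 / c₂) * ⟪θ - ϑ, g θ⟫ + (r ^ 2 / c₂) * ⟪θ - ϑ, g θ⟫
        = 2 * (r * ⟪θ - ϑ, g θ⟫) := by ring
    have hs2 : (2 * r - r ^ 2 / c₂) * (-(c₁ * ‖θ - ϑ‖ ^ 2))
        = -(c₁ * r * (2 - r / c₂)) * ‖θ - ϑ‖ ^ 2 := by ring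
    have hs3 : (1 - c₁ * r * (2 - r / c₂)) * ‖θ - ϑ‖ ^ 2
        = ‖θ - ϑ‖ ^ 2 + -(c₁ * r * (2 - r / c₂)) * ‖θ - ϑ‖ ^ 2 := by ring
    linarith [e1, e2, e3, hs1, hs2, hs3]
  refine ⟨hi, hii, hiii, hiv, ?_⟩
  -- (v)
  intro θ r hr
  obtain ⟨hr0, hrc⟩ := hr
  have := hiv θ r ⟨hr0, by linarith⟩
  have hle : (1 - c₁ * r * (2 - r / c₂)) * ‖θ - ϑ‖ ^ 2 ≤ (1 - c₁ * r) * ‖θ - ϑ‖ ^ 2 := by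
    apply mul_le_mul_of_nonneg_right _ (sq_nonneg _)
    have h1' : r / c₂ ≤ 1 := (div_le_one hc₂).mpr hrc
    nlinarith [mul_nonneg (mul_nonneg hc₁.le hr0) (sub_nonneg.mpr h1')]
  linarith
end

section
/- Let d ∈ ℕ, ϑ ∈ ℝ^d, c, ϱ ∈ (0,∞), let ⟨·,·⟩ be a scalar product on ℝ^d with induced norm ‖·‖, and let g : ℝ^d → ℝ^d satisfy for all θ ∈ ℝ^d that ‖θ + ϱ g(θ) − ϑ‖² ≤ (1 − cϱ)‖θ − ϑ‖². Then for all θ ∈ ℝ^d and all r ∈ [0,ϱ] it holds that ‖θ + r g(θ) − ϑ‖² ≤ (1 − cr)‖θ − ϑ‖². -/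
open scoped RealInnerProductSpace

/-- **Monotonicity of the one-step Lyapunov contraction property** (Lemma 2.9
in the numbering of the auxiliary results). -/
theorem stmt_11 {E : Type*} [NormedAddCommGroup E] [InnerProductSpace ℝ E]
    [FiniteDimensional ℝ E] (d : ℕ) (hd : 0 < d) (hdim : Module.finrank ℝ E = d)
    (ϑ : E) (c ϱ : ℝ) (hc : 0 < c) (hϱ : 0 < ϱ) (g : E → E)
    (h : ∀ θ : E, ‖θ + ϱ • g θ - ϑ‖ ^ 2 ≤ (1 - c * ϱ) * ‖θ - ϑ‖ ^ 2) :
    ∀ θ : E, ∀ r ∈ Set.Icc (0 : ℝ) ϱ,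
      ‖θ + r • g θ - ϑ‖ ^ 2 ≤ (1 - c * r) * ‖θ - ϑ‖ ^ 2 := by
  intro θ r hr
  obtain ⟨hr0, hrϱ⟩ := hr
  have e : ∀ s : ℝ, ‖θ + s • g θ - ϑ‖ ^ 2
      = ‖θ - ϑ‖ ^ 2 + 2 * s * (inner ℝ (θ - ϑ) (g θ) : ℝ) + s ^ 2 * ‖g θ‖ ^ 2 := by
    intro s
    have h1 : θ + s • g θ - ϑ = (θ - ϑ) + s • g θ := by abel
    rw [h1, norm_add_sq_real, real_inner_smul_right, norm_smul, mul_pow,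
      Real.norm_eq_abs, sq_abs]
    ring
  have key := h θ
  rw [e ϱ] at key
  rw [e r]
  have hw : (0:ℝ) ≤ ‖g θ‖ ^ 2 := sq_nonneg _
  have hv : (0:ℝ) ≤ ‖θ - ϑ‖ ^ 2 := sq_nonneg _
  -- from key: 2⟪v,w⟫ + ϱ‖w‖² ≤ -c‖v‖²
  have A : 2 * (inner ℝ (θ - ϑ) (g θ) : ℝ) + ϱ * ‖g θ‖ ^ 2 ≤ -c * ‖θ - ϑ‖ ^ 2 := by
    have hϱ' := hϱ
    nlinarith [key, hϱ.le, sq_nonneg ϱ]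
  nlinarith [mul_le_mul_of_nonneg_left A hr0, mul_le_mul_of_nonneg_left hrϱ (mul_nonneg hr0 hw)]
end

section
/- Let d ∈ ℕ, p ∈ [1,∞), let ⟨·,·⟩ be a scalar product on ℝ^d with induced norm ‖·‖, let (Ω, 𝓕, ℙ) be a probability space, let 𝕀 be a non-empty set, let X_i : Ω → ℝ^d, i ∈ 𝕀, be random variables, assume for all i ∈ 𝕀 that 𝔼[‖X_i‖] < ∞, assume sup_{i∈𝕀} 𝔼[‖X_i − 𝔼[X_i]‖^p] < ∞, and assume ℙ(sup_{i∈𝕀} ‖X_i‖ < ∞) > 0. Then it holds that sup_{i∈𝕀} 𝔼[‖X_i‖^p] < ∞. -/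
open MeasureTheory

lemma aux_rpow_add_le (a b : ENNReal) {p : ℝ} (hp : 0 ≤ p) :
    (a + b) ^ p ≤ 2 ^ p * (a ^ p + b ^ p) := by
  calc (a + b) ^ p ≤ (2 * max a b) ^ p := by
        refine ENNReal.rpow_le_rpow ?_ hp
        rw [two_mul]
        exact add_le_add (le_max_left a b) (le_max_right a b)
    _ = 2 ^ p * (max a b) ^ p := ENNReal.mul_rpow_of_nonneg _ _ hp
    _ ≤ 2 ^ p * (a ^ p + b ^ p) := by
        refine mul_le_mul_right ?_ _
        rcases le_total a b with h | h
        · rw [max_eq_right h]; exact le_add_self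
        · rw [max_eq_left h]; exact le_self_add

/-- **Uniform moment bound** (Lemma 4.5). -/
theorem stmt_16 {E : Type*} [NormedAddCommGroup E] [InnerProductSpace ℝ E]
    [FiniteDimensional ℝ E] (d : ℕ) (hd : 0 < d) (hdim : Module.finrank ℝ E = d)
    (p : ℝ) (hp : 1 ≤ p)
    {Ω : Type*} [MeasurableSpace Ω] (P : Measure Ω) [IsProbabilityMeasure P]
    {ι : Type*} [Nonempty ι] (X : ι → Ω → E)
    (hX_int : ∀ i, Integrable (X i) P)
    (hmom : (⨆ i, ∫⁻ ω, (‖X i ω - ∫ ω', X i ω' ∂P‖₊ : ENNReal) ^ p ∂P) < ⊤)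
    (hbdd : 0 < P {ω | BddAbove (Set.range fun i => ‖X i ω‖)}) :
    (⨆ i, ∫⁻ ω, (‖X i ω‖₊ : ENNReal) ^ p ∂P) < ⊤ := by
  have hp0 : (0:ℝ) < p := lt_of_lt_of_le one_pos hp
  set m : ι → E := fun i => ∫ ω', X i ω' ∂P with hm
  set Y : ι → Ω → E := fun i ω => X i ω - m i with hY
  set M : ENNReal := ⨆ i, ∫⁻ ω, (‖Y i ω‖₊ : ENNReal) ^ p ∂P with hMdef
  have hM : M < ⊤ := hmom
  -- measurability of Y-based integrand
  have hYmeas : ∀ i, AEMeasurable (fun ω => (‖Y i ω‖₊ : ENNReal) ^ p) P := by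
    intro i
    exact (((hX_int i).1.sub aestronglyMeasurable_const).enorm).pow_const p
  -- Step A: a set of uniform boundedness with positive measure
  have hA : ∃ n : ℕ, 0 < P {ω | ∀ i, ‖X i ω‖ ≤ (n : ℝ)} := by
    by_contra h
    push_neg at h
    have h0 : ∀ n : ℕ, P {ω | ∀ i, ‖X i ω‖ ≤ (n : ℝ)} = 0 := fun n => le_antisymm (h n) bot_le
    have hsub : {ω | BddAbove (Set.range fun i => ‖X i ω‖)}
        ⊆ ⋃ n : ℕ, {ω | ∀ i, ‖X i ω‖ ≤ (n : ℝ)} := by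
      intro ω hω
      obtain ⟨b, hb⟩ := hω
      obtain ⟨n, hn⟩ := exists_nat_ge b
      exact Set.mem_iUnion.2 ⟨n, fun i => le_trans (hb ⟨i, rfl⟩) hn⟩
    have : P {ω | BddAbove (Set.range fun i => ‖X i ω‖)} = 0 := by
      refine le_antisymm (le_trans (measure_mono hsub) ?_) bot_le
      refine le_trans (measure_iUnion_le _) ?_
      simp [h0]
    exact absurd this hbdd.ne'
  obtain ⟨n, hn⟩ := hA
  set A : Set Ω := {ω | ∀ i, ‖X i ω‖ ≤ (n : ℝ)} with hAdef
  set δ : ENNReal := P A with hδ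
  have hδ0 : δ ≠ 0 := hn.ne'
  have hδtop : δ ≠ ⊤ := (measure_lt_top P A).ne
  -- Step B: choose threshold
  set ε₀ : ENNReal := M / δ + 1 with hε₀
  have hε₀top : ε₀ ≠ ⊤ := by
    simp [hε₀, ENNReal.add_ne_top, (ENNReal.div_lt_top hM.ne hδ0).ne]
  set c : NNReal := ε₀.toNNReal ^ (1 / p) + 1 with hc
  have hc0 : c ≠ 0 := by positivity
  set ε : ENNReal := (c : ENNReal) ^ p with hε
  have hεtop : ε ≠ ⊤ := by
    rw [hε, ← ENNReal.coe_rpow_of_nonneg _ hp0.le]; exact ENNReal.coe_ne_top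
  have hε0 : ε ≠ 0 := by
    rw [hε]
    exact (ENNReal.rpow_pos (by exact_mod_cast hc0.bot_lt) ENNReal.coe_ne_top).ne'
  have hε₀ε : ε₀ ≤ ε := by
    rw [hε, ← ENNReal.coe_rpow_of_nonneg _ hp0.le]
    have h1 : ε₀.toNNReal ≤ c ^ p := by
      calc ε₀.toNNReal = (ε₀.toNNReal ^ (1 / p)) ^ p := by
            rw [← NNReal.rpow_mul, one_div_mul_cancel hp0.ne', NNReal.rpow_one]
        _ ≤ c ^ p := by
            refine NNReal.rpow_le_rpow ?_ hp0.le
            exact le_add_of_nonneg_right zero_le_one |>.trans_eq rfl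
      
    calc ε₀ = (ε₀.toNNReal : ENNReal) := (ENNReal.coe_toNNReal hε₀top).symm
      _ ≤ ((c ^ p : NNReal) : ENNReal) := by exact_mod_cast h1
  -- Markov: the bad sets are small
  have hbad : ∀ i, P {ω | ε ≤ (‖Y i ω‖₊ : ENNReal) ^ p} < δ := by
    intro i
    have hmarkov := mul_meas_ge_le_lintegral₀ (hYmeas i) ε
    have h1 : P {ω | ε ≤ (‖Y i ω‖₊ : ENNReal) ^ p} ≤ M / ε := by
      rw [ENNReal.le_div_iff_mul_le (Or.inl hε0) (Or.inl hεtop), mul_comm]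
      exact hmarkov.trans (le_iSup (fun i => ∫⁻ ω, (‖Y i ω‖₊ : ENNReal) ^ p ∂P) i)
    refine lt_of_le_of_lt h1 ?_
    have h2 : M / ε ≤ M / ε₀ := ENNReal.div_le_div_left hε₀ε M
    refine lt_of_le_of_lt h2 ?_
    rw [ENNReal.div_lt_iff (Or.inl (by simp [hε₀])) (Or.inl hε₀top)]
    rw [hε₀, mul_add, mul_one, ENNReal.mul_div_cancel hδ0 hδtop]
    exact ENNReal.lt_add_right hM.ne hδ0
  -- uniform bound on the means
  have hmean : ∀ i, ‖m i‖₊ ≤ (n : NNReal) + c := by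
    intro i
    have hne : (A ∩ {ω | ε ≤ (‖Y i ω‖₊ : ENNReal) ^ p}ᶜ).Nonempty := by
      by_contra h
      rw [Set.not_nonempty_iff_eq_empty] at h
      have hsub : A ⊆ {ω | ε ≤ (‖Y i ω‖₊ : ENNReal) ^ p} := by
        intro ω hω
        by_contra hω'
        exact Set.eq_empty_iff_forall_notMem.1 h ω ⟨hω, hω'⟩
      exact absurd (measure_mono hsub) (not_le.2 (hbad i))
    obtain ⟨ω, hωA, hωB⟩ := hne
    have hX : ‖X i ω‖₊ ≤ (n : NNReal) := by
      have := hωA i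
      rwa [← NNReal.coe_le_coe, coe_nnnorm, NNReal.coe_natCast]
    have hYb : ‖Y i ω‖₊ ≤ c := by
      have hlt : (‖Y i ω‖₊ : ENNReal) ^ p < ε := not_le.1 hωB
      rw [hε, ← ENNReal.coe_rpow_of_nonneg _ hp0.le,
        ← ENNReal.coe_rpow_of_nonneg _ hp0.le, ENNReal.coe_lt_coe] at hlt
      exact ((NNReal.rpow_lt_rpow_iff hp0).1 hlt).le
    calc ‖m i‖₊ = ‖X i ω - Y i ω‖₊ := by simp [hY]
      _ ≤ ‖X i ω‖₊ + ‖Y i ω‖₊ := nnnorm_sub_le _ _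
      _ ≤ (n : NNReal) + c := add_le_add hX hYb
  set K : NNReal := (n : NNReal) + c with hK
  -- final estimate
  have hfin : ∀ i, (∫⁻ ω, (‖X i ω‖₊ : ENNReal) ^ p ∂P)
      ≤ 2 ^ p * (M + (K : ENNReal) ^ p) := by
    intro i
    have hpt : ∀ ω, (‖X i ω‖₊ : ENNReal) ^ p
        ≤ 2 ^ p * ((‖Y i ω‖₊ : ENNReal) ^ p + (K : ENNReal) ^ p) := by
      intro ω
      refine le_trans ?_ (aux_rpow_add_le _ _ hp0.le)
      refine ENNReal.rpow_le_rpow ?_ hp0.le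
      have : ‖X i ω‖₊ ≤ ‖Y i ω‖₊ + K := by
        calc ‖X i ω‖₊ = ‖Y i ω + m i‖₊ := by simp [hY]
          _ ≤ ‖Y i ω‖₊ + ‖m i‖₊ := nnnorm_add_le _ _
          _ ≤ ‖Y i ω‖₊ + K := add_le_add_right (hmean i) _
      exact_mod_cast ENNReal.coe_le_coe.2 this
    calc (∫⁻ ω, (‖X i ω‖₊ : ENNReal) ^ p ∂P)
        ≤ ∫⁻ ω, 2 ^ p * ((‖Y i ω‖₊ : ENNReal) ^ p + (K : ENNReal) ^ p) ∂P :=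
          lintegral_mono hpt
      _ = 2 ^ p * ((∫⁻ ω, (‖Y i ω‖₊ : ENNReal) ^ p ∂P) + (K : ENNReal) ^ p) := by
          rw [lintegral_const_mul' _ _ (by
            exact (ENNReal.rpow_lt_top_of_nonneg hp0.le (by norm_num)).ne),
            lintegral_add_right' _ aemeasurable_const, lintegral_const,
            measure_univ, mul_one]
      _ ≤ 2 ^ p * (M + (K : ENNReal) ^ p) := by
          refine mul_le_mul_right (add_le_add_left ?_ _) _
          exact le_iSup (fun i => ∫⁻ ω, (‖Y i ω‖₊ : ENNReal) ^ p ∂P) i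
  refine lt_of_le_of_lt (iSup_le hfin) ?_
  refine ENNReal.mul_lt_top (ENNReal.rpow_lt_top_of_nonneg hp0.le (by norm_num)) ?_
  refine ENNReal.add_lt_top.2 ⟨hM, ?_⟩
  rw [← ENNReal.coe_rpow_of_nonneg _ hp0.le]
  exact ENNReal.coe_lt_top
end

section
/- Let d ∈ ℕ, p ∈ (1,∞), κ ∈ (0,∞), let ⟨·,·⟩ be a scalar product on ℝ^d with induced norm ‖·‖, let (Ω, 𝓕, ℙ) be a probability space, let (S, 𝓢) be a measurable space, let X : Ω → S be a random variable, let F : ℝ^d × S → ℝ be (𝓑(ℝ^d) ⊗ 𝓢)/𝓑(ℝ)-measurable, assume for all x ∈ S that θ ↦ F(θ,x) is C¹, assume for all θ ∈ ℝ^d that 𝔼[|F(θ,X)| + ‖(∇_θ F)(θ,X)‖] < ∞ and 𝔼[‖(∇_θ F)(θ,X) − 𝔼[(∇_θ F)(θ,X)]‖^p] ≤ κ(1 + ‖θ‖^p), and let f : ℝ^d → ℝ be the function satisfying for all θ ∈ ℝ^d that f(θ) = 𝔼[F(θ,X)]. Then (i) f ∈ C¹(ℝ^d, ℝ) and (ii)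 for all θ ∈ ℝ^d it holds that (∇f)(θ) = 𝔼[(∇_θ F)(θ,X)]. -/
open MeasureTheory
open scoped RealInnerProductSpace

section AuxLemmas
open Filter
open scoped ENNReal NNReal

open MeasureTheory Filter
open scoped ENNReal NNReal

lemma aux_pw {p : ℝ} (hp : 1 < p) {M : ℝ≥0∞} (hM1 : 1 ≤ M) (hMtop : M ≠ ∞) (x : ℝ≥0) :
    (x : ℝ≥0∞) ≤ min (x : ℝ≥0∞) M + (x : ℝ≥0∞) ^ p * (M ^ (p - 1))⁻¹ := by
  rcases le_total (x : ℝ≥0∞) M with h | h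
  · rw [min_eq_left h]; exact le_self_add
  · refine le_add_of_nonneg_of_le zero_le ?_
    have hx1 : (1 : ℝ≥0∞) ≤ (x : ℝ≥0∞) := le_trans hM1 h
    have hx0 : (x : ℝ≥0∞) ≠ 0 := by intro h0; rw [h0] at hx1; simp at hx1
    have hxt : (x : ℝ≥0∞) ≠ ∞ := ENNReal.coe_ne_top
    have hMp0 : M ^ (p - 1) ≠ 0 := by
      simp only [ne_eq, ENNReal.rpow_eq_zero_iff, not_or]
      constructor
      · rintro ⟨h0, -⟩; rw [h0] at hM1; simp at hM1
      · rintro ⟨h0, -⟩; exact hMtop h0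
    have hMpt : M ^ (p - 1) ≠ ∞ := ENNReal.rpow_ne_top_of_nonneg (by linarith) hMtop
    have hmono : M ^ (p - 1) ≤ (x : ℝ≥0∞) ^ (p - 1) := ENNReal.rpow_le_rpow h (by linarith)
    have hone : (1 : ℝ≥0∞) ≤ (x : ℝ≥0∞) ^ (p - 1) * (M ^ (p - 1))⁻¹ := by
      rw [← ENNReal.mul_inv_cancel hMp0 hMpt]
      exact mul_le_mul_left hmono _
    calc (x : ℝ≥0∞) = (x : ℝ≥0∞) * 1 := (mul_one _).symm
      _ ≤ (x : ℝ≥0∞) * ((x : ℝ≥0∞) ^ (p - 1) * (M ^ (p - 1))⁻¹) := mul_le_mul_right hone _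
      _ = ((x : ℝ≥0∞) ^ (1 : ℝ) * (x : ℝ≥0∞) ^ (p - 1)) * (M ^ (p - 1))⁻¹ := by
          rw [ENNReal.rpow_one, mul_assoc]
      _ = (x : ℝ≥0∞) ^ p * (M ^ (p - 1))⁻¹ := by
          rw [← ENNReal.rpow_add _ _ hx0 hxt]; ring_nf

lemma aux_trunc {Ω : Type*} [MeasurableSpace Ω] (P : Measure Ω) [IsProbabilityMeasure P]
    {E' : Type*} [NormedAddCommGroup E'] {k : ℕ → Ω → E'} {p : ℝ} (hp : 1 < p)
    {C : ℝ≥0∞} (hC : C ≠ ∞)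
    (hmeas : ∀ n, AEStronglyMeasurable (k n) P)
    (hbd : ∀ᶠ n in atTop, ∫⁻ ω, (‖k n ω‖₊ : ℝ≥0∞) ^ p ∂P ≤ C)
    (hae : ∀ᵐ ω ∂P, Tendsto (fun n => k n ω) atTop (nhds 0)) :
    Tendsto (fun n => ∫⁻ ω, (‖k n ω‖₊ : ℝ≥0∞) ∂P) atTop (nhds 0) := by
  rw [ENNReal.tendsto_nhds_zero]
  intro ε hε
  rcases eq_or_ne ε ∞ with rfl | hεtop
  · exact Eventually.of_forall fun n => le_top
  -- choose M
  set M : ℝ≥0∞ := 1 + (2 * C / ε) ^ (1 / (p - 1)) with hM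
  have hM1 : 1 ≤ M := le_add_of_nonneg_right zero_le
  have hMtop : M ≠ ∞ := by
    rw [hM]
    refine ENNReal.add_ne_top.mpr ⟨ENNReal.one_ne_top, ?_⟩
    have hple : (0:ℝ) ≤ 1 / (p - 1) := by
      apply le_of_lt; apply div_pos one_pos; linarith
    refine ENNReal.rpow_ne_top_of_nonneg hple ?_
    exact (ENNReal.div_lt_top (by finiteness) hε.ne').ne
  have hMp0 : M ^ (p - 1) ≠ 0 := by
    simp only [ne_eq, ENNReal.rpow_eq_zero_iff, not_or]
    exact ⟨fun ⟨h0, _⟩ => by simp [hM] at h0, fun ⟨h0, _⟩ => hMtop h0⟩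
  have hMpt : M ^ (p - 1) ≠ ∞ := ENNReal.rpow_ne_top_of_nonneg (by linarith) hMtop
  -- key bound on the tail constant
  have hkey : C * (M ^ (p - 1))⁻¹ ≤ ε / 2 := by
    have h1 : 2 * C / ε ≤ M ^ (p - 1) := by
      have : ((2 * C / ε) ^ (1 / (p - 1))) ^ (p - 1) ≤ M ^ (p - 1) :=
        ENNReal.rpow_le_rpow (le_add_self) (by linarith)
      rwa [← ENNReal.rpow_mul, one_div, inv_mul_cancel₀ (by linarith : p - 1 ≠ 0),
        ENNReal.rpow_one] at this
    rw [ENNReal.mul_inv_le_iff hMp0 hMpt]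
    calc C = ε / 2 * (2 * C / ε) := by
          rw [div_eq_mul_inv, div_eq_mul_inv,
            show ε * 2⁻¹ * (2 * C * ε⁻¹) = ε * ε⁻¹ * (2⁻¹ * 2) * C by ring,
            ENNReal.mul_inv_cancel hε.ne' hεtop,
            ENNReal.inv_mul_cancel two_ne_zero ENNReal.ofNat_ne_top, one_mul, one_mul]
      _ ≤ ε / 2 * M ^ (p - 1) := mul_le_mul_right h1 _
  -- dominated convergence for the truncated part
  have hJ : Tendsto (fun n => ∫⁻ ω, min (‖k n ω‖₊ : ℝ≥0∞) M ∂P) atTop (nhds 0) := by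
    have := tendsto_lintegral_of_dominated_convergence' (μ := P)
      (F := fun n ω => min (‖k n ω‖₊ : ℝ≥0∞) M) (f := fun _ => 0) (fun _ => M)
      (fun n => ((hmeas n).enorm).min aemeasurable_const)
      (fun n => Eventually.of_forall fun ω => min_le_right _ _)
      (by simpa using hMtop)
      (by
        filter_upwards [hae] with ω hω
        have h0 : Tendsto (fun n => (‖k n ω‖₊ : ℝ≥0∞)) atTop (nhds 0) := by
          have := hω.nnnorm
          simp only [nnnorm_zero] at this
          simpa using (ENNReal.tendsto_coe (f := atTop)).2 this
        simpa using h0.min (tendsto_const_nhds (x := M)))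
    simpa using this
  have hJ2 := (ENNReal.tendsto_nhds_zero.mp hJ) (ε / 2) (ENNReal.half_pos hε.ne')
  filter_upwards [hbd, hJ2] with n hb hj
  have hpt : ∀ ω, (‖k n ω‖₊ : ℝ≥0∞) ≤ min (‖k n ω‖₊ : ℝ≥0∞) M + (‖k n ω‖₊ : ℝ≥0∞) ^ p * (M ^ (p - 1))⁻¹ :=
    fun ω => aux_pw hp hM1 hMtop _
  calc ∫⁻ ω, (‖k n ω‖₊ : ℝ≥0∞) ∂P
      ≤ ∫⁻ ω, (min (‖k n ω‖₊ : ℝ≥0∞) M + (‖k n ω‖₊ : ℝ≥0∞) ^ p * (M ^ (p - 1))⁻¹) ∂P :=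
        lintegral_mono hpt
    _ = (∫⁻ ω, min (‖k n ω‖₊ : ℝ≥0∞) M ∂P) + ∫⁻ ω, (‖k n ω‖₊ : ℝ≥0∞) ^ p * (M ^ (p - 1))⁻¹ ∂P :=
        lintegral_add_left' (((hmeas n).enorm).min aemeasurable_const) _
    _ = (∫⁻ ω, min (‖k n ω‖₊ : ℝ≥0∞) M ∂P) + (∫⁻ ω, (‖k n ω‖₊ : ℝ≥0∞) ^ p ∂P) * (M ^ (p - 1))⁻¹ := by
        rw [lintegral_mul_const'' (f := fun ω => (‖k n ω‖₊ : ℝ≥0∞) ^ p) _ ((hmeas n).enorm.pow_const _)]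
    _ ≤ ε / 2 + C * (M ^ (p - 1))⁻¹ := add_le_add hj (mul_le_mul_left hb _)
    _ ≤ ε / 2 + ε / 2 := add_le_add_right hkey _
    _ = ε := ENNReal.add_halves ε


lemma aux_jensen {Ω : Type*} [MeasurableSpace Ω] (P : Measure Ω) [IsProbabilityMeasure P]
    {E' : Type*} [NormedAddCommGroup E'] {h : Ω → E'} {p : ℝ} (hp : 1 < p)
    (hmeas : AEStronglyMeasurable h P) :
    ∫⁻ ω, (‖h ω‖₊ : ℝ≥0∞) ∂P ≤ (∫⁻ ω, (‖h ω‖₊ : ℝ≥0∞) ^ p ∂P) ^ (1 / p) := by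
  have h1 : eLpNorm h 1 P ≤ eLpNorm h (ENNReal.ofReal p) P :=
    eLpNorm_le_eLpNorm_of_exponent_le (by simpa using ENNReal.one_le_ofReal.2 hp.le) hmeas
  rw [eLpNorm_one_eq_lintegral_enorm] at h1
  rwa [eLpNorm_eq_lintegral_rpow_enorm_toReal (by positivity) (by simp),
    ENNReal.toReal_ofReal (by positivity)] at h1


section Meas
variable {E S : Type*} [NormedAddCommGroup E] [InnerProductSpace ℝ E]
  [FiniteDimensional ℝ E] [MeasurableSpace E] [BorelSpace E] [MeasurableSpace S]

lemma aux_fderiv_meas (F : E → S → ℝ) (hF_meas : Measurable (Function.uncurry F))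
    (hF_C1 : ∀ x : S, ContDiff ℝ 1 (fun θ : E => F θ x)) (v : E) :
    Measurable (fun q : E × S => fderiv ℝ (fun ψ => F ψ q.2) q.1 v) := by
  apply measurable_of_tendsto_metrizable
    (f := fun (n : ℕ) (q : E × S) => ((n : ℝ) + 1) * (F (q.1 + ((n : ℝ) + 1)⁻¹ • v) q.2 - F q.1 q.2))
  · intro n
    apply Measurable.mul measurable_const
    apply Measurable.sub
    · exact hF_meas.comp ((measurable_fst.add measurable_const).prodMk measurable_snd)
    · exact hF_meas.comp (measurable_fst.prodMk measurable_snd)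
  · rw [tendsto_pi_nhds]
    intro q
    set φ : ℝ → ℝ := fun t => F (q.1 + t • v) q.2 with hφ
    have hγ : HasDerivAt (fun t : ℝ => q.1 + t • v) v 0 := by
      simpa using ((hasDerivAt_id (0:ℝ)).smul_const v).const_add q.1
    have hFd : HasFDerivAt (fun ψ => F ψ q.2) (fderiv ℝ (fun ψ => F ψ q.2) q.1) (q.1 + (0:ℝ) • v) := by
      simpa using (((hF_C1 q.2).differentiable one_ne_zero) q.1).hasFDerivAt
    have hD : HasDerivAt φ (fderiv ℝ (fun ψ => F ψ q.2) q.1 v) 0 := by rw [hφ]; exact hFd.comp_hasDerivAt 0 hγ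
    have hslope := hasDerivAt_iff_tendsto_slope.mp hD
    have ht : Filter.Tendsto (fun n : ℕ => ((n : ℝ) + 1)⁻¹) Filter.atTop (nhdsWithin (0:ℝ) {(0:ℝ)}ᶜ) := by
      apply tendsto_nhdsWithin_of_tendsto_nhds_of_eventually_within
      · simpa [one_div] using (tendsto_one_div_add_atTop_nhds_zero_nat (𝕜 := ℝ))
      · exact Filter.Eventually.of_forall fun n => by simp; positivity
    have := hslope.comp ht
    convert this using 2 with n
    have hne : ((n : ℝ) + 1)⁻¹ ≠ 0 := by positivity
    simp only [Function.comp_apply, slope_def_field, hφ, zero_smul, add_zero]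
    field_simp
    ring
  done

lemma aux_gradient_eq_sum (f : E → ℝ) (x : E) :
    gradient f x = ∑ i, (fderiv ℝ f x (stdOrthonormalBasis ℝ E i)) • stdOrthonormalBasis ℝ E i := by
  set b := stdOrthonormalBasis ℝ E
  have h := b.sum_repr (gradient f x)
  rw [← h]
  congr 1
  ext i
  congr 1
  rw [b.repr_apply_apply, gradient, real_inner_comm, InnerProductSpace.toDual_symm_apply]

lemma aux_grad_meas (F : E → S → ℝ) (hF_meas : Measurable (Function.uncurry F))
    (hF_C1 : ∀ x : S, ContDiff ℝ 1 (fun θ : E => F θ x)) :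
    Measurable (fun q : E × S => gradient (fun ψ => F ψ q.2) q.1) := by
  have : (fun q : E × S => gradient (fun ψ => F ψ q.2) q.1) = fun q : E × S =>
      ∑ i, (fderiv ℝ (fun ψ => F ψ q.2) q.1 (stdOrthonormalBasis ℝ E i)) • stdOrthonormalBasis ℝ E i := by
    funext q; exact aux_gradient_eq_sum _ _
  rw [this]
  exact Finset.measurable_sum _ fun i _ =>
    (aux_fderiv_meas F hF_meas hF_C1 _).smul_const _

end Meas


lemma aux_add_rpow {p : ℝ} (hp : 0 ≤ p) (a b : ℝ≥0∞) :
    (a + b) ^ p ≤ 2 ^ p * (a ^ p + b ^ p) := by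
  have h1 : a + b ≤ 2 * max a b := by
    rcases le_total a b with h | h
    · calc a + b ≤ b + b := by gcongr
        _ = 2 * b := (two_mul b).symm
        _ ≤ 2 * max a b := by gcongr; exact le_max_right a b
    · calc a + b ≤ a + a := by gcongr
        _ = 2 * a := (two_mul a).symm
        _ ≤ 2 * max a b := by gcongr; exact le_max_left a b
  calc (a + b) ^ p ≤ (2 * max a b) ^ p := ENNReal.rpow_le_rpow h1 hp
    _ = 2 ^ p * (max a b) ^ p := ENNReal.mul_rpow_of_nonneg _ _ hp
    _ ≤ 2 ^ p * (a ^ p + b ^ p) := by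
        gcongr
        rcases le_total a b with h | h
        · rw [max_eq_right h]; exact le_add_self
        · rw [max_eq_left h]; exact le_self_add

lemma aux_cont {E : Type*} [NormedAddCommGroup E] [InnerProductSpace ℝ E]
    [FiniteDimensional ℝ E]
    {Ω : Type*} [MeasurableSpace Ω] (P : Measure Ω) [IsProbabilityMeasure P]
    (g : E → Ω → E) (p κ : ℝ) (hp : 1 < p) (hκ : 0 < κ)
    (hgint : ∀ θ, Integrable (g θ) P)
    (hgcont : ∀ ω, Continuous (fun θ => g θ ω))
    (hmom : ∀ θ : E, ∫⁻ ω, (‖g θ ω - ∫ ω', g θ ω' ∂P‖₊ : ℝ≥0∞) ^ p ∂P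
      ≤ ENNReal.ofReal (κ * (1 + ‖θ‖ ^ p))) :
    Continuous (fun θ => ∫ ω, g θ ω ∂P) := by
  have hp0 : (0:ℝ) < p := by linarith
  set G : E → E := fun θ => ∫ ω, g θ ω ∂P with hG
  rw [continuous_iff_continuousAt]
  intro θ
  rw [ContinuousAt, tendsto_iff_seq_tendsto]
  intro u hu
  -- pointwise convergence of the gradients
  have hknto : ∀ ω, Tendsto (fun n => g (u n) ω - g θ ω) atTop (nhds 0) := by
    intro ω
    have h1 : Tendsto (fun n => g (u n) ω) atTop (nhds (g θ ω)) :=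
      ((hgcont ω).continuousAt.tendsto).comp hu
    simpa using h1.sub (tendsto_const_nhds (x := g θ ω))
  have hknmeas : ∀ n : ℕ, AEStronglyMeasurable (fun ω => g (u n) ω - g θ ω) P :=
    fun n => ((hgint (u n)).aestronglyMeasurable).sub (hgint θ).aestronglyMeasurable
  -- eventual uniform moment bound
  set C₀ : ℝ≥0∞ := ENNReal.ofReal (κ * (1 + (‖θ‖ + 1) ^ p)) with hC₀
  have hC₀top : C₀ ≠ ∞ := ENNReal.ofReal_ne_top
  have hub : ∀ᶠ n in atTop, ‖u n‖ ≤ ‖θ‖ + 1 := by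
    have := hu.norm
    filter_upwards [this.eventually_le_const (by linarith : ‖θ‖ < ‖θ‖ + 1)] with n hn
    exact hn
  have hBn : ∀ᶠ n in atTop,
      ∫⁻ ω, (‖g (u n) ω - G (u n)‖₊ : ℝ≥0∞) ^ p ∂P ≤ C₀ := by
    filter_upwards [hub] with n hn
    refine (hmom (u n)).trans ?_
    apply ENNReal.ofReal_le_ofReal
    have : ‖u n‖ ^ p ≤ (‖θ‖ + 1) ^ p :=
      Real.rpow_le_rpow (norm_nonneg _) hn hp0.le
    nlinarith
  set Cθ : ℝ≥0∞ := ENNReal.ofReal (κ * (1 + ‖θ‖ ^ p)) with hCθ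
  have hCθtop : Cθ ≠ ∞ := ENNReal.ofReal_ne_top
  -- h n = centered difference
  set h : ℕ → Ω → E := fun n ω => (g (u n) ω - G (u n)) - (g θ ω - G θ) with hh
  set D : ℝ≥0∞ := 2 ^ p * (C₀ + Cθ) with hD
  have hDtop : D ≠ ∞ := by
    rw [hD]
    exact ENNReal.mul_ne_top (ENNReal.rpow_ne_top_of_nonneg hp0.le (by norm_num))
      (ENNReal.add_ne_top.2 ⟨hC₀top, hCθtop⟩)
  have hhmeasur : ∀ n, AEStronglyMeasurable (h n) P := fun n =>
    (((hgint (u n)).aestronglyMeasurable).sub aestronglyMeasurable_const).sub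
      (((hgint θ).aestronglyMeasurable).sub aestronglyMeasurable_const)
  have hm1 : ∀ ψ : E, AEMeasurable (fun ω => (‖g ψ ω - G ψ‖₊ : ℝ≥0∞) ^ p) P := by
    intro ψ
    apply AEMeasurable.pow_const
    exact ((hgint ψ).aestronglyMeasurable.sub aestronglyMeasurable_const).enorm
  have hhm : ∀ᶠ n in atTop, ∫⁻ ω, (‖h n ω‖₊ : ℝ≥0∞) ^ p ∂P ≤ D := by
    filter_upwards [hBn] with n hn
    have hpt : ∀ ω, (‖h n ω‖₊ : ℝ≥0∞) ^ p ≤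
        2 ^ p * ((‖g (u n) ω - G (u n)‖₊ : ℝ≥0∞) ^ p + (‖g θ ω - G θ‖₊ : ℝ≥0∞) ^ p) := by
      intro ω
      refine le_trans ?_ (aux_add_rpow hp0.le _ _)
      refine ENNReal.rpow_le_rpow ?_ hp0.le
      rw [← ENNReal.coe_add]
      exact_mod_cast nnnorm_sub_le _ _
    calc ∫⁻ ω, (‖h n ω‖₊ : ℝ≥0∞) ^ p ∂P
        ≤ ∫⁻ ω, 2 ^ p * ((‖g (u n) ω - G (u n)‖₊ : ℝ≥0∞) ^ p + (‖g θ ω - G θ‖₊ : ℝ≥0∞) ^ p) ∂P :=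
          lintegral_mono hpt
      _ = 2 ^ p * ∫⁻ ω, ((‖g (u n) ω - G (u n)‖₊ : ℝ≥0∞) ^ p + (‖g θ ω - G θ‖₊ : ℝ≥0∞) ^ p) ∂P :=
          lintegral_const_mul' _ _ (ENNReal.rpow_ne_top_of_nonneg hp0.le (by norm_num))
      _ = 2 ^ p * ((∫⁻ ω, (‖g (u n) ω - G (u n)‖₊ : ℝ≥0∞) ^ p ∂P)
            + ∫⁻ ω, (‖g θ ω - G θ‖₊ : ℝ≥0∞) ^ p ∂P) := by
          rw [lintegral_add_left' (hm1 (u n)) _]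
      _ ≤ 2 ^ p * (C₀ + Cθ) := by gcongr; exact hmom θ
  -- convergence in measure of the raw differences
  have htim : TendstoInMeasure P (fun n ω => g (u n) ω - g θ ω) atTop (fun _ => 0) :=
    tendstoInMeasure_of_tendsto_ae hknmeas (Eventually.of_forall fun ω => hknto ω)
  have hsmall : ∀ᶠ n in atTop,
      P {ω | 1 ≤ dist (g (u n) ω - g θ ω) 0} ≤ 1 / 2 :=
    by
      filter_upwards [(ENNReal.tendsto_nhds_zero.mp (htim 1 one_pos)) (1 / 2) (by norm_num)] with n hn
      refine le_trans (measure_mono ?_) hn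
      intro ω hω
      simp only [Set.mem_setOf_eq] at hω ⊢
      rw [edist_dist]
      exact ENNReal.one_le_ofReal.2 hω
  -- eventual bound on the difference of the integrals
  set A : ℕ → E := fun n => G (u n) - G θ with hA
  set Abnd : ℝ≥0∞ := (2 * D) ^ (1 / p) + 1 with hAbnd
  have hAbndtop : Abnd ≠ ∞ := by
    rw [hAbnd]
    exact ENNReal.add_ne_top.2 ⟨ENNReal.rpow_ne_top_of_nonneg (by positivity)
      (ENNReal.mul_ne_top (by norm_num) hDtop), by norm_num⟩
  have hAbd : ∀ᶠ n in atTop, (‖A n‖₊ : ℝ≥0∞) ≤ Abnd := by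
    filter_upwards [hsmall, hhm] with n hs hm
    set ε : ℝ≥0∞ := ENNReal.ofReal (‖A n‖ - 1) ^ p with hε
    -- the "good" set has measure at least 1/2 and lies in the superlevel set
    have hsub : {ω | dist (g (u n) ω - g θ ω) 0 < 1} ⊆
        {ω | ε ≤ (‖h n ω‖₊ : ℝ≥0∞) ^ p} := by
      intro ω hω
      simp only [Set.mem_setOf_eq, dist_zero_right] at hω ⊢
      refine ENNReal.rpow_le_rpow ?_ hp0.le
      rw [← enorm_eq_nnnorm, ← ofReal_norm]
      apply ENNReal.ofReal_le_ofReal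
      have hhn : h n ω = (g (u n) ω - g θ ω) - A n := by
        simp only [hh, hA]; abel
      rw [hhn]
      have := norm_sub_norm_le (g (u n) ω - g θ ω) (A n)
      have h2 := norm_sub_rev (g (u n) ω - g θ ω) (A n)
      calc ‖A n‖ - 1 ≤ ‖A n‖ - ‖g (u n) ω - g θ ω‖ := by linarith
        _ ≤ ‖A n - (g (u n) ω - g θ ω)‖ := by
            have := norm_sub_norm_le (A n) (g (u n) ω - g θ ω); linarith
        _ = ‖g (u n) ω - g θ ω - A n‖ := norm_sub_rev _ _
    have hhalf : (1 / 2 : ℝ≥0∞) ≤ P {ω | dist (g (u n) ω - g θ ω) 0 < 1} := by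
      have hcover : (Set.univ : Set Ω) ⊆ {ω | dist (g (u n) ω - g θ ω) 0 < 1} ∪
          {ω | 1 ≤ dist (g (u n) ω - g θ ω) 0} := by
        intro ω _
        rcases lt_or_ge (dist (g (u n) ω - g θ ω) 0) 1 with hlt | hle
        · exact Or.inl hlt
        · exact Or.inr hle
      have h1 : (1 : ℝ≥0∞) ≤ P {ω | dist (g (u n) ω - g θ ω) 0 < 1} +
          P {ω | 1 ≤ dist (g (u n) ω - g θ ω) 0} := by
        calc (1 : ℝ≥0∞) = P Set.univ := measure_univ.symm
          _ ≤ _ := (measure_mono hcover).trans (measure_union_le _ _)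
      have h2 : (1 / 2 : ℝ≥0∞) + 1 / 2 ≤ P {ω | dist (g (u n) ω - g θ ω) 0 < 1} + 1 / 2 := by
        rw [ENNReal.add_halves]
        exact h1.trans (add_le_add_right hs _)
      exact ENNReal.le_of_add_le_add_right (by norm_num) h2
    have hcheb : ε * (1 / 2) ≤ D := by
      calc ε * (1 / 2) ≤ ε * P {ω | ε ≤ (‖h n ω‖₊ : ℝ≥0∞) ^ p} := by
            refine mul_le_mul_right (le_trans hhalf (measure_mono hsub)) _
        _ ≤ ∫⁻ ω, (‖h n ω‖₊ : ℝ≥0∞) ^ p ∂P :=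
            mul_meas_ge_le_lintegral₀ ((hhmeasur n).enorm.pow_const _) _
        _ ≤ D := hm
    have hε2D : ε ≤ 2 * D := by
      have h3 : 2 * (ε * (1 / 2)) ≤ 2 * D := mul_le_mul_right hcheb _
      calc ε = 2 * (ε * (1 / 2)) := by
            rw [one_div, ← mul_assoc, mul_comm (2 : ℝ≥0∞) ε, mul_assoc,
              ENNReal.mul_inv_cancel two_ne_zero ENNReal.ofNat_ne_top, mul_one]
        _ ≤ 2 * D := h3
    have hεroot : ENNReal.ofReal (‖A n‖ - 1) ≤ (2 * D) ^ (1 / p) := by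
      have := ENNReal.rpow_le_rpow hε2D (by positivity : (0:ℝ) ≤ 1 / p)
      rwa [hε, ← ENNReal.rpow_mul, mul_one_div, div_self hp0.ne', ENNReal.rpow_one] at this
    rw [← enorm_eq_nnnorm, ← ofReal_norm, hAbnd]
    calc ENNReal.ofReal ‖A n‖ = ENNReal.ofReal ((‖A n‖ - 1) + 1) := by ring_nf
      _ ≤ ENNReal.ofReal (‖A n‖ - 1) + ENNReal.ofReal 1 := ENNReal.ofReal_add_le
      _ ≤ (2 * D) ^ (1 / p) + 1 := by
          rw [ENNReal.ofReal_one]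
          exact add_le_add_left hεroot _
  -- moment bound for raw differences
  set D₂ : ℝ≥0∞ := 2 ^ p * (D + Abnd ^ p) with hD₂
  have hD₂top : D₂ ≠ ∞ := by
    rw [hD₂]
    exact ENNReal.mul_ne_top (ENNReal.rpow_ne_top_of_nonneg hp0.le (by norm_num))
      (ENNReal.add_ne_top.2 ⟨hDtop, ENNReal.rpow_ne_top_of_nonneg hp0.le hAbndtop⟩)
  have hknm : ∀ᶠ n in atTop,
      ∫⁻ ω, (‖g (u n) ω - g θ ω‖₊ : ℝ≥0∞) ^ p ∂P ≤ D₂ := by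
    filter_upwards [hhm, hAbd] with n hm hb
    have hpt : ∀ ω, (‖g (u n) ω - g θ ω‖₊ : ℝ≥0∞) ^ p ≤
        2 ^ p * ((‖h n ω‖₊ : ℝ≥0∞) ^ p + (‖A n‖₊ : ℝ≥0∞) ^ p) := by
      intro ω
      refine le_trans ?_ (aux_add_rpow hp0.le _ _)
      refine ENNReal.rpow_le_rpow ?_ hp0.le
      have hdec : g (u n) ω - g θ ω = h n ω + A n := by
        simp only [hh, hA]; abel
      rw [hdec, ← ENNReal.coe_add]
      exact_mod_cast nnnorm_add_le _ _
    calc ∫⁻ ω, (‖g (u n) ω - g θ ω‖₊ : ℝ≥0∞) ^ p ∂P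
        ≤ ∫⁻ ω, 2 ^ p * ((‖h n ω‖₊ : ℝ≥0∞) ^ p + (‖A n‖₊ : ℝ≥0∞) ^ p) ∂P :=
          lintegral_mono hpt
      _ = 2 ^ p * ∫⁻ ω, ((‖h n ω‖₊ : ℝ≥0∞) ^ p + (‖A n‖₊ : ℝ≥0∞) ^ p) ∂P :=
          lintegral_const_mul' _ _ (ENNReal.rpow_ne_top_of_nonneg hp0.le (by norm_num))
      _ = 2 ^ p * ((∫⁻ ω, (‖h n ω‖₊ : ℝ≥0∞) ^ p ∂P) + ∫⁻ ω, (‖A n‖₊ : ℝ≥0∞) ^ p ∂P) := by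
          rw [lintegral_add_left' (f := fun ω => (‖h n ω‖₊ : ℝ≥0∞) ^ p) ((hhmeasur n).enorm.pow_const _) _]
      _ = 2 ^ p * ((∫⁻ ω, (‖h n ω‖₊ : ℝ≥0∞) ^ p ∂P) + (‖A n‖₊ : ℝ≥0∞) ^ p) := by
          rw [lintegral_const, measure_univ, mul_one]
      _ ≤ 2 ^ p * (D + Abnd ^ p) := by
          have : (‖A n‖₊ : ℝ≥0∞) ^ p ≤ Abnd ^ p := ENNReal.rpow_le_rpow hb hp0.le
          gcongr
  -- Vitali-type conclusion
  have htr : Tendsto (fun n => ∫⁻ ω, (‖g (u n) ω - g θ ω‖₊ : ℝ≥0∞) ∂P) atTop (nhds 0) :=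
    aux_trunc P hp hD₂top hknmeas hknm (Eventually.of_forall hknto)
  -- squeeze
  have hGbd : ∀ n, (‖G (u n) - G θ‖₊ : ℝ≥0∞) ≤ ∫⁻ ω, (‖g (u n) ω - g θ ω‖₊ : ℝ≥0∞) ∂P := by
    intro n
    have hint : G (u n) - G θ = ∫ ω, (g (u n) ω - g θ ω) ∂P := by
      rw [integral_sub (hgint (u n)) (hgint θ)]
    rw [hint]
    exact enorm_integral_le_lintegral_enorm _
  have hGto : Tendsto (fun n => (‖G (u n) - G θ‖₊ : ℝ≥0∞)) atTop (nhds 0) :=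
    tendsto_of_tendsto_of_tendsto_of_le_of_le tendsto_const_nhds htr
      (fun n => zero_le) hGbd
  rw [tendsto_iff_dist_tendsto_zero]
  have := (ENNReal.tendsto_toReal ENNReal.zero_ne_top).comp hGto
  simpa [dist_eq_norm, Function.comp_def, ENNReal.coe_toReal, coe_nnnorm] using this


end AuxLemmas

open Filter
open scoped ENNReal NNReal

set_option maxHeartbeats 1000000 in
/-- **Interchanging gradient and expectation** (Lemma 4.6). -/
theorem stmt_17 {E : Type*} [NormedAddCommGroup E] [InnerProductSpace ℝ E]
    [FiniteDimensional ℝ E] [MeasurableSpace E] [BorelSpace E]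
    (d : ℕ) (hd : 0 < d) (hdim : Module.finrank ℝ E = d)
    (p κ : ℝ) (hp : 1 < p) (hκ : 0 < κ)
    {Ω : Type*} [MeasurableSpace Ω] (P : Measure Ω) [IsProbabilityMeasure P]
    {S : Type*} [MeasurableSpace S] (X : Ω → S) (hX : Measurable X)
    (F : E → S → ℝ) (hF_meas : Measurable (Function.uncurry F))
    (hF_C1 : ∀ x : S, ContDiff ℝ 1 (fun θ : E => F θ x))
    (hint : ∀ θ : E, Integrable (fun ω => F θ (X ω)) P ∧
      Integrable (fun ω => gradient (fun ψ : E => F ψ (X ω)) θ) P)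
    (hmom : ∀ θ : E,
      ∫⁻ ω, (‖gradient (fun ψ : E => F ψ (X ω)) θ
          - ∫ ω', gradient (fun ψ : E => F ψ (X ω')) θ ∂P‖₊ : ENNReal) ^ p ∂P
        ≤ ENNReal.ofReal (κ * (1 + ‖θ‖ ^ p)))
    (f : E → ℝ) (hf : ∀ θ : E, f θ = ∫ ω, F θ (X ω) ∂P) :
    ContDiff ℝ 1 f ∧
    ∀ θ : E, gradient f θ = ∫ ω, gradient (fun ψ : E => F ψ (X ω)) θ ∂P := by
  have hp0 : (0:ℝ) < p := by linarith
  set g : E → Ω → E := fun θ ω => gradient (fun ψ : E => F ψ (X ω)) θ with hg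
  set G : E → E := fun θ => ∫ ω, g θ ω ∂P with hG
  have hgint : ∀ θ, Integrable (g θ) P := fun θ => (hint θ).2
  have hdiffat : ∀ x θ, DifferentiableAt ℝ (fun ψ : E => F ψ x) θ :=
    fun x θ => ((hF_C1 x).differentiable one_ne_zero) θ
  have haff : ∀ (a b : E), Continuous fun t : ℝ => a + t • b :=
    fun a b => continuous_const.add (continuous_id.smul continuous_const)
  have hgcont : ∀ ω, Continuous (fun θ => g θ ω) := by
    intro ω
    exact (InnerProductSpace.toDual ℝ E).symm.continuous.comp
      ((hF_C1 (X ω)).continuous_fderiv one_ne_zero)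
  have hjm : Measurable (fun q : E × Ω => g q.1 q.2) :=
    (aux_grad_meas F hF_meas hF_C1).comp
      (measurable_fst.prodMk (hX.comp measurable_snd))
  have hGcont : Continuous G := aux_cont P g p κ hp hκ hgint hgcont hmom
  -- inner products with the gradient are directional derivatives
  have hinner : ∀ (x : S) (u v : E), ⟪gradient (fun ψ : E => F ψ x) u, v⟫ =
      fderiv ℝ (fun ψ : E => F ψ x) u v := by
    intro x u v
    rw [gradient, InnerProductSpace.toDual_symm_apply]
  -- the pointwise fundamental theorem of calculus along segments
  have hftc : ∀ (θ v : E) (ω : Ω), F (θ + v) (X ω) - F θ (X ω) =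
      ∫ t in Set.Ioc (0:ℝ) 1, ⟪g (θ + t • v) ω, v⟫ ∂volume := by
    intro θ v ω
    have hderiv : ∀ t : ℝ, HasDerivAt (fun s : ℝ => F (θ + s • v) (X ω))
        (⟪g (θ + t • v) ω, v⟫) t := by
      intro t
      have hγ : HasDerivAt (fun s : ℝ => θ + s • v) v t := by
        simpa using ((hasDerivAt_id t).smul_const v).const_add θ
      have hFd := (hdiffat (X ω) (θ + t • v)).hasFDerivAt
      have := hFd.comp_hasDerivAt t hγ
      rw [hinner]
      exact this
    have hcont : Continuous fun t : ℝ => ⟪g (θ + t • v) ω, v⟫ :=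
      ((hgcont ω).comp (haff θ v)).inner continuous_const
    have := intervalIntegral.integral_eq_sub_of_hasDerivAt
      (f := fun s : ℝ => F (θ + s • v) (X ω))
      (fun t _ => hderiv t) (hcont.intervalIntegrable 0 1)
    rw [← intervalIntegral.integral_of_le (by norm_num : (0:ℝ) ≤ 1), this]
    simp
  -- a uniform bound on segments
  have hsegbd : ∀ θ v : E, ∃ K : ℝ≥0∞, K ≠ ∞ ∧ ∀ t ∈ Set.Ioc (0:ℝ) 1,
      ∫⁻ ω, (‖g (θ + t • v) ω‖₊ : ℝ≥0∞) ∂P ≤ K := by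
    intro θ v
    obtain ⟨M, hM⟩ := ((isCompact_Icc (a := (0:ℝ)) (b := 1)).image
      (haff θ v)).exists_bound_of_continuousOn
      hGcont.continuousOn
    refine ⟨ENNReal.ofReal (κ * (1 + (‖θ‖ + ‖v‖) ^ p)) ^ (1 / p) + ENNReal.ofReal M,
      ENNReal.add_ne_top.2 ⟨ENNReal.rpow_ne_top_of_nonneg (by positivity)
        ENNReal.ofReal_ne_top, ENNReal.ofReal_ne_top⟩, ?_⟩
    intro t ht
    set u : E := θ + t • v with hu
    have hunorm : ‖u‖ ≤ ‖θ‖ + ‖v‖ := by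
      have h1 : ‖t • v‖ ≤ ‖v‖ := by
        rw [norm_smul, Real.norm_eq_abs, abs_of_pos ht.1]
        nlinarith [norm_nonneg v, ht.2, ht.1]
      calc ‖θ + t • v‖ ≤ ‖θ‖ + ‖t • v‖ := norm_add_le _ _
        _ ≤ ‖θ‖ + ‖v‖ := by linarith
    have hMu : ‖G u‖ ≤ M := hM u ⟨t, ⟨ht.1.le, ht.2⟩, rfl⟩
    have hpt : ∀ ω, (‖g u ω‖₊ : ℝ≥0∞) ≤ (‖g u ω - G u‖₊ : ℝ≥0∞) + (‖G u‖₊ : ℝ≥0∞) := by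
      intro ω
      rw [← ENNReal.coe_add]
      exact_mod_cast (nnnorm_le_nnnorm_add_nnnorm_sub' (g u ω) (G u)).trans (le_of_eq (add_comm _ _))
    have hm1 : AEMeasurable (fun ω => (‖g u ω - G u‖₊ : ℝ≥0∞)) P := by
      refine (AEStronglyMeasurable.enorm ?_ : AEMeasurable (fun ω => ‖g u ω - G u‖ₑ) P)
      exact (hgint u).aestronglyMeasurable.sub aestronglyMeasurable_const
    calc ∫⁻ ω, (‖g u ω‖₊ : ℝ≥0∞) ∂P
        ≤ ∫⁻ ω, ((‖g u ω - G u‖₊ : ℝ≥0∞) + (‖G u‖₊ : ℝ≥0∞)) ∂P := lintegral_mono hpt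
      _ = (∫⁻ ω, (‖g u ω - G u‖₊ : ℝ≥0∞) ∂P) + (‖G u‖₊ : ℝ≥0∞) := by
          rw [lintegral_add_left' hm1 _, lintegral_const, measure_univ, mul_one]
      _ ≤ ENNReal.ofReal (κ * (1 + (‖θ‖ + ‖v‖) ^ p)) ^ (1 / p) + ENNReal.ofReal M := by
          gcongr
          · refine le_trans (aux_jensen P hp
              ((hgint u).aestronglyMeasurable.sub aestronglyMeasurable_const)) ?_
            refine ENNReal.rpow_le_rpow (le_trans (hmom u) ?_) (by positivity)
            apply ENNReal.ofReal_le_ofReal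
            have : ‖u‖ ^ p ≤ (‖θ‖ + ‖v‖) ^ p :=
              Real.rpow_le_rpow (norm_nonneg _) hunorm hp0.le
            nlinarith
          · rw [← enorm_eq_nnnorm, ← ofReal_norm]
            exact ENNReal.ofReal_le_ofReal hMu
  -- product integrability
  have hprod : ∀ θ v : E, Integrable
      (Function.uncurry fun (ω : Ω) (t : ℝ) => ⟪g (θ + t • v) ω, v⟫)
      (P.prod (volume.restrict (Set.Ioc (0:ℝ) 1))) := by
    intro θ v
    obtain ⟨K, hKtop, hK⟩ := hsegbd θ v
    have hmeas2 : Measurable (Function.uncurry fun (ω : Ω) (t : ℝ) => ⟪g (θ + t • v) ω, v⟫) := by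
      have h1 : Measurable (fun q : Ω × ℝ => g (θ + q.2 • v) q.1) :=
        hjm.comp ((measurable_const.add (measurable_snd.smul_const v)).prodMk measurable_fst)
      have h2 : Continuous (fun w : E => ⟪w, v⟫) := continuous_id.inner continuous_const
      exact (h2.measurable).comp h1
    refine ⟨hmeas2.aestronglyMeasurable, ?_⟩
    rw [HasFiniteIntegral]
    have hswap : ∫⁻ z, (‖(Function.uncurry fun (ω : Ω) (t : ℝ) => ⟪g (θ + t • v) ω, v⟫) z‖₊ : ℝ≥0∞)
        ∂(P.prod (volume.restrict (Set.Ioc (0:ℝ) 1)))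
        = ∫⁻ t, (∫⁻ ω, (‖⟪g (θ + t • v) ω, v⟫‖₊ : ℝ≥0∞) ∂P) ∂(volume.restrict (Set.Ioc (0:ℝ) 1)) :=
      lintegral_prod_symm _ (hmeas2.enorm.aemeasurable)
    refine hswap.trans_lt ?_
    have hbd : ∀ᵐ t ∂(volume.restrict (Set.Ioc (0:ℝ) 1)),
        (∫⁻ ω, (‖⟪g (θ + t • v) ω, v⟫‖₊ : ℝ≥0∞) ∂P) ≤ K * ‖v‖₊ := by
      filter_upwards [ae_restrict_mem measurableSet_Ioc] with t ht
      calc ∫⁻ ω, (‖⟪g (θ + t • v) ω, v⟫‖₊ : ℝ≥0∞) ∂P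
          ≤ ∫⁻ ω, (‖g (θ + t • v) ω‖₊ : ℝ≥0∞) * ‖v‖₊ ∂P := by
            apply lintegral_mono
            intro ω
            exact ENNReal.coe_le_coe.2 (nnnorm_inner_le_nnnorm (𝕜 := ℝ) (g (θ + t • v) ω) v)
        _ = (∫⁻ ω, (‖g (θ + t • v) ω‖₊ : ℝ≥0∞) ∂P) * ‖v‖₊ := by
            rw [lintegral_mul_const'' (f := fun ω => (‖g (θ + t • v) ω‖₊ : ℝ≥0∞)) _ (((hgint _).aestronglyMeasurable).enorm)]
        _ ≤ K * ‖v‖₊ := mul_le_mul_left (hK t ht) _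
    calc ∫⁻ t, (∫⁻ ω, (‖⟪g (θ + t • v) ω, v⟫‖₊ : ℝ≥0∞) ∂P) ∂(volume.restrict (Set.Ioc (0:ℝ) 1))
        ≤ ∫⁻ _, K * ‖v‖₊ ∂(volume.restrict (Set.Ioc (0:ℝ) 1)) := lintegral_mono_ae hbd
      _ < ∞ := by
          rw [lintegral_const]
          refine ENNReal.mul_lt_top (ENNReal.mul_lt_top hKtop.lt_top (by finiteness)) ?_
          simp [Real.volume_Ioc]
  -- the integral representation of increments of f
  have hrepr : ∀ θ v : E, f (θ + v) - f θ =
      ∫ t in Set.Ioc (0:ℝ) 1, ⟪G (θ + t • v), v⟫ ∂volume := by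
    intro θ v
    have h1 : f (θ + v) - f θ = ∫ ω, (F (θ + v) (X ω) - F θ (X ω)) ∂P := by
      rw [hf, hf, integral_sub (hint _).1 (hint _).1]
    have h2 : ∫ ω, (F (θ + v) (X ω) - F θ (X ω)) ∂P
        = ∫ ω, ∫ t in Set.Ioc (0:ℝ) 1, ⟪g (θ + t • v) ω, v⟫ ∂volume ∂P :=
      integral_congr_ae (Filter.Eventually.of_forall fun ω => hftc θ v ω)
    rw [h1, h2, integral_integral_swap (hprod θ v)]
    apply integral_congr_ae
    apply Filter.Eventually.of_forall
    intro t
    calc ∫ ω, ⟪g (θ + t • v) ω, v⟫ ∂P = ∫ ω, ⟪v, g (θ + t • v) ω⟫ ∂P := by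
          simp_rw [real_inner_comm]
      _ = ⟪v, G (θ + t • v)⟫ := integral_inner (hgint _) v
      _ = ⟪G (θ + t • v), v⟫ := real_inner_comm _ _
  -- differentiability
  have hfderiv : ∀ θ : E, HasFDerivAt f (InnerProductSpace.toDual ℝ E (G θ)) θ := by
    intro θ
    rw [hasFDerivAt_iff_isLittleO_nhds_zero, Asymptotics.isLittleO_iff]
    intro c hc
    obtain ⟨δ, hδ, hball⟩ := Metric.continuousAt_iff.mp hGcont.continuousAt c hc
    filter_upwards [Metric.ball_mem_nhds (0:E) hδ] with v hv
    have hv' : ‖v‖ < δ := by simpa [dist_zero_right] using mem_ball_iff_norm.mp hv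
    have hGcont2 : Continuous fun t : ℝ => ⟪G (θ + t • v), v⟫ :=
      (hGcont.comp (haff θ v)).inner continuous_const
    have hGi : IntegrableOn (fun t : ℝ => ⟪G (θ + t • v), v⟫) (Set.Ioc (0:ℝ) 1) volume :=
      hGcont2.integrableOn_Ioc
    have hconst : ⟪G θ, v⟫ = ∫ _ in Set.Ioc (0:ℝ) 1, ⟪G θ, v⟫ ∂volume := by
      rw [setIntegral_const, Real.volume_real_Ioc]
      norm_num
    have hkey : f (θ + v) - f θ - (InnerProductSpace.toDual ℝ E (G θ)) v
        = ∫ t in Set.Ioc (0:ℝ) 1, ⟪G (θ + t • v) - G θ, v⟫ ∂volume := by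
      rw [InnerProductSpace.toDual_apply_apply, hrepr θ v, hconst,
        ← integral_sub hGi (integrableOn_const (by simp [Real.volume_Ioc]))]
      simp_rw [inner_sub_left]
    rw [hkey]
    have hbd2 : ∀ t ∈ Set.Ioc (0:ℝ) 1, ‖⟪G (θ + t • v) - G θ, v⟫‖ ≤ c * ‖v‖ := by
      intro t ht
      have hdist : dist (θ + t • v) θ < δ := by
        rw [dist_eq_norm]
        have : ‖θ + t • v - θ‖ = ‖t • v‖ := by congr 1; abel
        rw [this, norm_smul, Real.norm_eq_abs, abs_of_pos ht.1]
        nlinarith [norm_nonneg v, ht.1, ht.2, hv']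
      have hGd : ‖G (θ + t • v) - G θ‖ ≤ c := by
        have := hball hdist
        rw [dist_eq_norm] at this
        exact this.le
      calc ‖⟪G (θ + t • v) - G θ, v⟫‖ ≤ ‖G (θ + t • v) - G θ‖ * ‖v‖ := by
            exact_mod_cast abs_real_inner_le_norm _ _
        _ ≤ c * ‖v‖ := by
            have := norm_nonneg v
            nlinarith
    calc ‖∫ t in Set.Ioc (0:ℝ) 1, ⟪G (θ + t • v) - G θ, v⟫ ∂volume‖
        ≤ (c * ‖v‖) * (volume (Set.Ioc (0:ℝ) 1)).toReal :=
          norm_setIntegral_le_of_norm_le_const (by simp [Real.volume_Ioc]) hbd2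
      _ = c * ‖v‖ := by simp [Real.volume_Ioc]
  refine ⟨?_, fun θ => ?_⟩
  · rw [contDiff_one_iff_fderiv]
    refine ⟨fun θ => (hfderiv θ).differentiableAt, ?_⟩
    have hfd : fderiv ℝ f = fun θ => InnerProductSpace.toDual ℝ E (G θ) :=
      funext fun θ => (hfderiv θ).fderiv
    rw [hfd]
    exact (InnerProductSpace.toDual ℝ E).continuous.comp hGcont
  · rw [gradient, (hfderiv θ).fderiv, LinearIsometryEquiv.symm_apply_apply]
end
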